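/- Let Σ be a smooth complete fan in ℤ^n, and let deg : ℚ ⊗ R(Σ) → ℚ be the linear form sending a relation (a_x)_{x ∈ G(Σ)} to Σ_x a_x (this is intersection with the anticanonical class −K = Σ_x V(x); in particular deg(r(P)) = deg P for every primitive collection P). Then deg is strictly positive on every nonzero element of the Mori cone NE(Σ) if and only if every primitive collection of Σ has strictly positive degree. (This is Batyrev's characterization: the associated toric variety is Fano if and only if all primitive collections have strictly positive degree.) -/

import Mathlib

/-! ## Basic setup: cones and smooth complete fans in `ℤ^n` with ambient space `ℚ^n` -/

/-- The ambient rational vector space `ℚ^n`. -/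
abbrev Vec (n : ℕ) := Fin n → ℚ

/-- The lattice `ℤ^n`. -/
abbrev LVec (n : ℕ) := Fin n → ℤ

/-- The natural inclusion `ℤ^n → ℚ^n`. -/
def toQ {n : ℕ} (v : LVec n) : Vec n := fun i => (v i : ℚ)

/-- The cone generated by a set `S ⊆ ℚ^n`: all nonnegative rational linear
combinations of elements of `S`. -/
def coneGen {n : ℕ} (S : Set (Vec n)) : Set (Vec n) :=
  {x | ∃ (T : Finset (Vec n)) (c : Vec n → ℚ),
    ↑T ⊆ S ∧ (∀ s, 0 ≤ c s) ∧ x = ∑ s ∈ T, c s • s}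

/-- `G` is a face of the cone `σ`: it is cut out on `σ` by a linear form
which is nonnegative on `σ`. -/
def IsFaceOf {n : ℕ} (G σ : Set (Vec n)) : Prop :=
  ∃ u : Vec n →ₗ[ℚ] ℚ, (∀ x ∈ σ, 0 ≤ u x) ∧ G = {x ∈ σ | u x = 0}

/-- A smooth complete fan in `ℤ^n`: a finite collection of cones in `ℚ^n`, each
generated by (the images of) a subset of some `ℤ`-basis of `ℤ^n`, closed under
taking faces, such that the intersection of two cones is a face of each, and whose
union is all of `ℚ^n`. -/
structure IsSmoothCompleteFan {n : ℕ} (F : Set (Set (Vec n))) : Prop where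
  finite : F.Finite
  smooth : ∀ σ ∈ F, ∃ (b : Module.Basis (Fin n) ℤ (LVec n)) (I : Finset (Fin n)),
    σ = coneGen (toQ '' (⇑b '' ↑I))
  faces : ∀ σ ∈ F, ∀ G, IsFaceOf G σ → G ∈ F
  inter : ∀ σ ∈ F, ∀ τ ∈ F, IsFaceOf (σ ∩ τ) σ ∧ IsFaceOf (σ ∩ τ) τ
  covers : ⋃₀ F = Set.univ

/-- A primitive lattice vector. -/
def IsPrimitive {n : ℕ} (v : LVec n) : Prop :=
  v ≠ 0 ∧ ∀ (k : ℤ) (w : LVec n), v = k • w → IsUnit k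

/-- `G(Σ)`: the set of primitive lattice generators of the rays of the fan. -/
def gens {n : ℕ} (F : Set (Set (Vec n))) : Set (LVec n) :=
  {v | IsPrimitive v ∧ coneGen {toQ v} ∈ F}

/-- A primitive collection of the fan `F`: a set `P` of ray generators such that
`P` does not generate a cone of `F`, but every proper subset obtained by removing
one element does. -/
def IsPrimCol {n : ℕ} (F : Set (Set (Vec n))) (P : Finset (LVec n)) : Prop :=
  ↑P ⊆ gens F ∧ coneGen (toQ '' ↑P) ∉ F ∧
    ∀ x ∈ P, coneGen (toQ '' ↑(P.erase x)) ∈ F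

/-- `HasPrimRel F P Y a` : the sum of the elements of `P` lies in the relative
interior of the cone of `F` generated by `Y`, with (positive integral) coordinates
`a y` on the generators `y ∈ Y`; i.e. the primitive relation of `P` is
`∑_{x ∈ P} x = ∑_{y ∈ Y} a y • y`. -/
def HasPrimRel {n : ℕ} (F : Set (Set (Vec n))) (P Y : Finset (LVec n))
    (a : LVec n → ℤ) : Prop :=
  ↑Y ⊆ gens F ∧ coneGen (toQ '' ↑Y) ∈ F ∧ (∀ y ∈ Y, 0 < a y) ∧
    ∑ x ∈ P, x = ∑ y ∈ Y, a y • y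

/-- The degree of a primitive collection `P` with primitive relation data `(Y, a)`:
`deg P = |P| - ∑ a_y`. -/
def degOf {n : ℕ} (P Y : Finset (LVec n)) (a : LVec n → ℤ) : ℤ :=
  (P.card : ℤ) - ∑ y ∈ Y, a y

/-- A fan is Fano if every primitive collection has strictly positive degree
(Batyrev's criterion). -/
def IsFano {n : ℕ} (F : Set (Set (Vec n))) : Prop :=
  ∀ P Y a, IsPrimCol F P → HasPrimRel F P Y a → 0 < degOf P Y a

/-- The star subdivision of the fan `F` at the cone generated by `T`, with new ray
generated by `x = ∑_{t ∈ T} t`: its cones are the cones of `F` not containing the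
cone of `T`, together with the cones generated by `{x} ∪ A` where `A` runs over the
generator sets of those faces, not containing the cone of `T`, of the cones of `F`
containing the cone of `T`. -/
def starSubdiv {n : ℕ} (F : Set (Set (Vec n))) (T : Finset (LVec n)) :
    Set (Set (Vec n)) :=
  {σ ∈ F | ¬ coneGen (toQ '' ↑T) ⊆ σ} ∪
  {ρ | ∃ A : Finset (LVec n), ↑A ⊆ gens F ∧
      (∃ σ ∈ F, coneGen (toQ '' ↑T) ⊆ σ ∧ IsFaceOf (coneGen (toQ '' (↑A : Set (LVec n)))) σ) ∧
      ¬ coneGen (toQ '' ↑T) ⊆ coneGen (toQ '' (↑A : Set (LVec n))) ∧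
      ρ = coneGen (toQ '' ↑(insert (∑ t ∈ T, t) A : Finset (LVec n)))}

/-- `F'` is obtained from `F` by a star subdivision at a cone of `F` of dimension
at least `2` (equivalently, the associated toric morphism is a blow-up along a
smooth invariant center). -/
def IsBlowup {n : ℕ} (F' F : Set (Set (Vec n))) : Prop :=
  ∃ T : Finset (LVec n), ↑T ⊆ gens F ∧ 2 ≤ T.card ∧
    coneGen (toQ '' ↑T) ∈ F ∧ F' = starSubdiv F T

/-- The fan `F'` refines the fan `F`: every cone of `F'` is contained in a cone
of `F`. -/
def Refines {n : ℕ} (F' F : Set (Set (Vec n))) : Prop :=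
  ∀ σ' ∈ F', ∃ σ ∈ F, σ' ⊆ σ


/-! ## Relations, wall relations and the Mori cone -/

/-- Integral (or rational) relations among the ray generators are identified with
finitely supported functions `ℤ^n →₀ ℚ`; the relation `(a_x)` corresponds to
`∑ a_x • x = 0`.  The convex cone generated by a set `S` of such relations:
all finite nonnegative rational combinations of elements of `S`. -/
def qCone {n : ℕ} (S : Set (LVec n →₀ ℚ)) : Set (LVec n →₀ ℚ) :=
  {x | ∃ (G : Finset (LVec n →₀ ℚ)) (c : (LVec n →₀ ℚ) → ℚ),
    ↑G ⊆ S ∧ (∀ w, 0 ≤ c w) ∧ x = ∑ w ∈ G, c w • w}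

/-- The primitive relation `r(P)` of a primitive collection `P` with relation data
`(Y, a)`: coordinate `1` at each `x ∈ P` and `-a y` at each `y ∈ Y`. -/
noncomputable def primRelVec {n : ℕ} (P Y : Finset (LVec n)) (a : LVec n → ℤ) : LVec n →₀ ℚ :=
  (∑ x ∈ P, Finsupp.single x (1 : ℚ)) - ∑ y ∈ Y, Finsupp.single y (a y : ℚ)

/-- `r` is a wall relation of the fan `F`: there is a wall (an `(n-1)`-dimensional
cone of `F` generated by `U`) which is a common facet of the two `n`-dimensional
cones generated by `U ∪ {u}` and `U ∪ {u'}`, with the integral relation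
`u + u' = ∑_{v ∈ U} b v • v`, and `r` has coordinate `1` at `u` and `u'` and
`-b v` at each `v ∈ U`. -/
def IsWallRel {n : ℕ} (F : Set (Set (Vec n))) (r : LVec n →₀ ℚ) : Prop :=
  ∃ (U : Finset (LVec n)) (u u' : LVec n) (b : LVec n → ℤ),
    ↑U ⊆ gens F ∧ U.card = n - 1 ∧ u ∈ gens F ∧ u' ∈ gens F ∧
    u ∉ U ∧ u' ∉ U ∧ u ≠ u' ∧
    coneGen (toQ '' ↑U) ∈ F ∧
    coneGen (toQ '' ↑(insert u U : Finset (LVec n))) ∈ F ∧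
    coneGen (toQ '' ↑(insert u' U : Finset (LVec n))) ∈ F ∧
    u + u' = ∑ v ∈ U, b v • v ∧
    r = Finsupp.single u 1 + Finsupp.single u' 1
        - ∑ v ∈ U, Finsupp.single v (b v : ℚ)

/-- The Mori cone `NE(Σ)`: the convex cone generated by the wall relations of the
fan (it equals the cone of effective 1-cycles of the associated toric variety). -/
def MoriCone {n : ℕ} (F : Set (Set (Vec n))) : Set (LVec n →₀ ℚ) :=
  qCone {r | IsWallRel F r}

/-- The set of primitive relations `r(P)` of the fan `F`, `P` ranging over the
primitive collections of `F`. -/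
def PrimRels {n : ℕ} (F : Set (Set (Vec n))) : Set (LVec n →₀ ℚ) :=
  {r | ∃ P Y a, IsPrimCol F P ∧ HasPrimRel F P Y a ∧ r = primRelVec P Y a}

/-- The degree linear form on relations: `(a_x) ↦ ∑_x a_x`; this is intersection
with the anticanonical class `-K = ∑_x V(x)`. -/
def degMap {n : ℕ} (r : LVec n →₀ ℚ) : ℚ := r.sum fun _ c => c

/-- A smooth complete fan is projective if it carries a support function
`ψ : ℚ^n → ℚ` that is linear on each cone, convex (subadditive and positively
homogeneous), and strictly convex with respect to the fan: for each
`n`-dimensional cone `σ` with linear function `l` agreeing with `ψ` on `σ`,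
`l < ψ` outside `σ`. -/
def IsProjectiveFan {n : ℕ} (F : Set (Set (Vec n))) : Prop :=
  ∃ ψ : Vec n → ℚ,
    (∀ σ ∈ F, ∃ l : Vec n →ₗ[ℚ] ℚ, ∀ x ∈ σ, ψ x = l x) ∧
    (∀ x y : Vec n, ψ (x + y) ≤ ψ x + ψ y) ∧
    (∀ t : ℚ, 0 ≤ t → ∀ x : Vec n, ψ (t • x) = t * ψ x) ∧
    (∀ σ ∈ F, Submodule.span ℚ σ = ⊤ →
      ∀ l : Vec n →ₗ[ℚ] ℚ, (∀ x ∈ σ, ψ x = l x) → ∀ x ∉ σ, l x < ψ x)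

/-- A nonzero element `v` of the convex cone `C` spans an extremal ray of `C`:
whenever `v = v₁ + v₂` with `v₁, v₂ ∈ C`, both summands are nonnegative rational
multiples of `v`. -/
def SpansExtremalRay {n : ℕ} (C : Set (LVec n →₀ ℚ)) (v : LVec n →₀ ℚ) : Prop :=
  v ≠ 0 ∧ v ∈ C ∧ ∀ v₁ ∈ C, ∀ v₂ ∈ C, v = v₁ + v₂ →
    ∃ t₁ t₂ : ℚ, 0 ≤ t₁ ∧ 0 ≤ t₂ ∧ v₁ = t₁ • v ∧ v₂ = t₂ • v

-- AUX START
namespace BatAux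
open Finset

variable {n : ℕ}

/-! ### `toQ` basics -/

lemma toQ_inj : Function.Injective (toQ (n := n)) := by
  intro x y h
  funext i
  have := congrFun h i
  simpa [toQ] using this

lemma toQ_add (v w : LVec n) : toQ (v + w) = toQ v + toQ w := by
  funext i; simp [toQ]

lemma toQ_zsmul (k : ℤ) (v : LVec n) : toQ (k • v) = (k : ℚ) • toQ v := by
  funext i; simp [toQ]

lemma toQ_zero : toQ (0 : LVec n) = 0 := by funext i; simp [toQ]

lemma toQ_sum {α : Type*} (A : Finset α) (f : α → LVec n) :
    toQ (∑ a ∈ A, f a) = ∑ a ∈ A, toQ (f a) := by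
  classical
  induction A using Finset.induction with
  | empty => simp [toQ_zero]
  | @insert a s h ih => simp [Finset.sum_insert h, toQ_add, ih]

lemma toQ_eq_zero_iff {v : LVec n} : toQ v = 0 ↔ v = 0 := by
  constructor
  · intro h; exact toQ_inj (by rw [h, toQ_zero])
  · rintro rfl; exact toQ_zero

/-! ### membership in `coneGen` -/

lemma mem_coneGen_self {S : Set (Vec n)} {s : Vec n} (hs : s ∈ S) : s ∈ coneGen S := by
  classical
  refine ⟨{s}, fun t => if t = s then 1 else 0, by simpa using hs, ?_, ?_⟩
  · intro t; by_cases h : t = s <;> simp [h]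
  · simp

lemma zero_mem_coneGen (S : Set (Vec n)) : (0 : Vec n) ∈ coneGen S :=
  ⟨∅, fun _ => 0, by simp, fun _ => le_refl _, by simp⟩

/-- A nonnegative combination of the `toQ`-images of a finset lies in the cone. -/
lemma sum_mem_coneGen (A : Finset (LVec n)) (c : LVec n → ℚ) (hc : ∀ x ∈ A, 0 ≤ c x) :
    (∑ x ∈ A, c x • toQ x) ∈ coneGen (toQ '' ↑A) := by
  classical
  refine ⟨A.image toQ, fun s => ∑ x ∈ A.filter (fun x => toQ x = s), c x, ?_, ?_, ?_⟩
  · intro s hs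
    simp only [Finset.coe_image, Set.mem_image] at hs ⊢
    exact hs
  · intro s
    refine Finset.sum_nonneg fun x hx => hc x (Finset.mem_filter.mp hx).1
  · rw [Finset.sum_image (fun x _ y _ h => toQ_inj h)]
    refine (Finset.sum_congr rfl fun x hx => ?_).symm
    have : A.filter (fun y => toQ y = toQ x) = {x} := by
      ext y
      simp only [Finset.mem_filter, Finset.mem_singleton]
      constructor
      · rintro ⟨_, h⟩; exact toQ_inj h
      · rintro rfl; exact ⟨hx, rfl⟩
    simp only []
    rw [this, Finset.sum_singleton]

/-- Extract a representation with coefficients indexed by the generating finset. -/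
lemma rep_of_mem_coneGen {A : Finset (LVec n)} {z : Vec n}
    (hz : z ∈ coneGen (toQ '' ↑A)) :
    ∃ c : LVec n → ℚ, (∀ x, 0 ≤ c x) ∧ z = ∑ x ∈ A, c x • toQ x := by
  classical
  obtain ⟨T, c, hT, hc, rfl⟩ := hz
  have hTA : T ⊆ A.image toQ := by
    intro s hs
    have := hT hs
    simp only [Set.mem_image, Finset.mem_coe] at this
    obtain ⟨x, hx, rfl⟩ := this
    exact Finset.mem_image_of_mem _ hx
  refine ⟨fun x => if toQ x ∈ T then c (toQ x) else 0, ?_, ?_⟩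
  · intro x; by_cases h : toQ x ∈ T <;> simp [h, hc]
  · have : ∑ x ∈ A, (if toQ x ∈ T then c (toQ x) else 0) • toQ x
        = ∑ x ∈ A.filter (fun x => toQ x ∈ T), c (toQ x) • toQ x := by
      rw [Finset.sum_filter]
      refine Finset.sum_congr rfl fun x _ => ?_
      by_cases h : toQ x ∈ T <;> simp [h]
    rw [this]
    have himg : T = (A.filter (fun x => toQ x ∈ T)).image toQ := by
      ext s
      simp only [Finset.mem_image, Finset.mem_filter]
      constructor
      · intro hs
        obtain ⟨x, hx, rfl⟩ := Finset.mem_image.mp (hTA hs)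
        exact ⟨x, ⟨hx, hs⟩, rfl⟩
      · rintro ⟨x, ⟨_, hx⟩, rfl⟩; exact hx
    conv_lhs => rw [himg]
    rw [Finset.sum_image (fun x _ y _ h => toQ_inj h)]


/-! ### The rational basis attached to an integral basis -/

lemma toQ_std (i : Fin n) :
    toQ (fun j => if i = j then (1:ℤ) else 0) = fun j => if i = j then (1:ℚ) else 0 := by
  funext j; by_cases h : i = j <;> simp [toQ, h]

lemma span_toQ_basis (b : Module.Basis (Fin n) ℤ (LVec n)) :
    ⊤ ≤ Submodule.span ℚ (Set.range fun i => toQ (b i)) := by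
  classical
  set S := Submodule.span ℚ (Set.range fun i => toQ (b i)) with hS
  have hstd : ∀ w : LVec n, toQ w ∈ S := by
    intro w
    have hw : w = ∑ i, (b.repr w) i • b i := (Module.Basis.sum_repr b w).symm
    rw [hw, toQ_sum]
    refine Submodule.sum_mem _ fun i _ => ?_
    rw [toQ_zsmul]
    exact Submodule.smul_mem _ _ (Submodule.subset_span ⟨i, rfl⟩)
  intro x _
  have hx : x = ∑ i, x i • toQ (fun j => if i = j then (1:ℤ) else 0) := by
    funext j
    rw [Finset.sum_apply]
    have : ∀ i, (x i • toQ (fun j => if i = j then (1:ℤ) else 0)) j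
        = if i = j then x i else 0 := by
      intro i
      by_cases h : i = j <;> simp [toQ, h]
    simp only [this]
    simp
  rw [hx]
  exact Submodule.sum_mem _ fun i _ => Submodule.smul_mem _ _ (hstd _)

/-- The `ℚ`-basis of `ℚ^n` obtained from a `ℤ`-basis of `ℤ^n`. -/
noncomputable def qb (b : Module.Basis (Fin n) ℤ (LVec n)) : Module.Basis (Fin n) ℚ (Vec n) :=
  basisOfTopLeSpanOfCardEqFinrank (fun i => toQ (b i)) (span_toQ_basis b)
    (by simp [Module.finrank_fintype_fun_eq_card])

lemma qb_apply (b : Module.Basis (Fin n) ℤ (LVec n)) (i : Fin n) : qb b i = toQ (b i) := by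
  rw [qb, coe_basisOfTopLeSpanOfCardEqFinrank]

lemma repr_sum_smul (b : Module.Basis (Fin n) ℤ (LVec n)) (J : Finset (Fin n)) (c : Fin n → ℚ)
    (i : Fin n) : (qb b).repr (∑ j ∈ J, c j • qb b j) i = if i ∈ J then c i else 0 := by
  classical
  rw [map_sum]
  rw [Finsupp.finset_sum_apply]
  have : ∀ j ∈ J, ((qb b).repr (c j • qb b j)) i
      = if j = i then c j else 0 := by
    intro j _
    rw [map_smul, Module.Basis.repr_self]
    simp [Finsupp.single_apply]
  rw [Finset.sum_congr rfl this]
  simp [Finset.sum_ite_eq]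

lemma qb_repr_toQ (b : Module.Basis (Fin n) ℤ (LVec n)) (x : LVec n) (i : Fin n) :
    (qb b).repr (toQ x) i = ((b.repr x) i : ℚ) := by
  classical
  have hx : toQ x = ∑ j, ((b.repr x) j : ℚ) • qb b j := by
    conv_lhs => rw [← Module.Basis.sum_repr b x]
    rw [toQ_sum]
    refine Finset.sum_congr rfl fun j _ => ?_
    rw [toQ_zsmul, qb_apply]
  rw [hx, repr_sum_smul]
  simp

/-! ### Coordinates characterize membership in a smooth cone -/

lemma cone_coe_image (b : Module.Basis (Fin n) ℤ (LVec n)) (I : Finset (Fin n)) :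
    (toQ '' (⇑b '' ↑I)) = toQ '' (↑(I.image b) : Set (LVec n)) := by
  rw [Finset.coe_image]

lemma mem_cone_iff_coords (b : Module.Basis (Fin n) ℤ (LVec n)) (I : Finset (Fin n)) (z : Vec n) :
    z ∈ coneGen (toQ '' (⇑b '' ↑I)) ↔
      (∀ i, 0 ≤ (qb b).repr z i) ∧ (∀ i ∉ I, (qb b).repr z i = 0) := by
  classical
  rw [cone_coe_image]
  constructor
  · intro hz
    obtain ⟨c, hc, rfl⟩ := rep_of_mem_coneGen hz
    have hsum : ∑ x ∈ I.image b, c x • toQ x = ∑ j ∈ I, c (b j) • qb b j := by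
      rw [Finset.sum_image (fun x hx y hy h => b.injective h)]
      exact Finset.sum_congr rfl fun j _ => by rw [qb_apply]
    rw [hsum]
    constructor
    · intro i; rw [repr_sum_smul]
      by_cases h : i ∈ I <;> simp [h, hc]
    · intro i hi; rw [repr_sum_smul]; simp [hi]
  · rintro ⟨h1, h2⟩
    have hz : z = ∑ j ∈ I, ((qb b).repr z j) • qb b j := by
      conv_lhs => rw [← Module.Basis.sum_repr (qb b) z]
      rw [Finset.sum_subset (Finset.subset_univ I)]
      intro j _ hj
      rw [h2 j hj, zero_smul]
    set c : LVec n → ℚ := fun x =>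
      if h : ∃ j, j ∈ I ∧ b j = x then (qb b).repr z h.choose else 0 with hcdef
    have hcb : ∀ j ∈ I, c (b j) = (qb b).repr z j := by
      intro j hj
      have hex : ∃ k, k ∈ I ∧ b k = b j := ⟨j, hj, rfl⟩
      have hch := hex.choose_spec
      have : hex.choose = j := b.injective hch.2
      simp only [hcdef, dif_pos hex, this]
    have := sum_mem_coneGen (I.image b) c ?_
    · have hs : ∑ x ∈ I.image b, c x • toQ x = z := by
        rw [Finset.sum_image (fun x hx y hy h => b.injective h)]
        rw [hz]
        refine Finset.sum_congr rfl fun j hj => ?_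
        rw [hcb j hj, qb_apply]
      rwa [hs] at this
    · intro x hx
      by_cases h : ∃ j, j ∈ I ∧ b j = x
      · simp only [hcdef, dif_pos h]; exact h1 _
      · simp [hcdef, dif_neg h]

/-! ### Faces of smooth cones belong to the fan -/

variable {F : Set (Set (Vec n))}

lemma face_mem (hF : IsSmoothCompleteFan F) {σ : Set (Vec n)} (hσ : σ ∈ F)
    (b : Module.Basis (Fin n) ℤ (LVec n)) (I : Finset (Fin n))
    (hrep : σ = coneGen (toQ '' (⇑b '' ↑I))) {J : Finset (Fin n)} (hJ : J ⊆ I) :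
    coneGen (toQ '' (⇑b '' ↑J)) ∈ F := by
  classical
  set ℓ : Vec n →ₗ[ℚ] ℚ := ∑ i ∈ I \ J, (qb b).coord i with hldef
  have hlval : ∀ x, ℓ x = ∑ i ∈ I \ J, (qb b).repr x i := by
    intro x
    rw [hldef, LinearMap.sum_apply]
    exact Finset.sum_congr rfl fun i _ => by rw [Module.Basis.coord_apply]
  refine hF.faces σ hσ _ ⟨ℓ, ?_, ?_⟩
  · intro x hx
    rw [hrep, mem_cone_iff_coords] at hx
    rw [hlval]
    exact Finset.sum_nonneg fun i _ => hx.1 i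
  · ext x
    rw [mem_cone_iff_coords]
    simp only [Set.mem_setOf_eq]
    constructor
    · rintro ⟨h1, h2⟩
      refine ⟨?_, ?_⟩
      · rw [hrep, mem_cone_iff_coords]
        exact ⟨h1, fun i hi => h2 i (fun hiJ => hi (hJ hiJ))⟩
      · rw [hlval]
        exact Finset.sum_eq_zero fun i hi => h2 i (Finset.mem_sdiff.mp hi).2
    · rintro ⟨hx, hl⟩
      rw [hrep, mem_cone_iff_coords] at hx
      rw [hlval] at hl
      have hzero : ∀ i ∈ I \ J, (qb b).repr x i = 0 :=
        (Finset.sum_eq_zero_iff_of_nonneg (fun i _ => hx.1 i)).mp hl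
      refine ⟨hx.1, fun i hi => ?_⟩
      by_cases h : i ∈ I
      · exact hzero i (Finset.mem_sdiff.mpr ⟨h, hi⟩)
      · exact hx.2 i h

/-! ### Basis vectors are primitive ray generators -/

lemma basis_primitive (b : Module.Basis (Fin n) ℤ (LVec n)) (i : Fin n) : IsPrimitive (b i) := by
  refine ⟨b.ne_zero i, fun k w hkw => ?_⟩
  have h1 : (b.repr (b i)) i = 1 := by rw [Module.Basis.repr_self]; simp
  have h2 : (b.repr (k • w)) i = k * (b.repr w) i := by
    rw [map_smul]; simp
  rw [hkw, h2] at h1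
  exact IsUnit.of_mul_eq_one (a := k) _ h1

lemma basis_mem_gens (hF : IsSmoothCompleteFan F) {σ : Set (Vec n)} (hσ : σ ∈ F)
    (b : Module.Basis (Fin n) ℤ (LVec n)) (I : Finset (Fin n))
    (hrep : σ = coneGen (toQ '' (⇑b '' ↑I))) {i : Fin n} (hi : i ∈ I) :
    b i ∈ gens F := by
  classical
  refine ⟨basis_primitive b i, ?_⟩
  have := face_mem hF hσ b I hrep (J := {i}) (by simpa using hi)
  have himg : (toQ '' (⇑b '' ↑({i} : Finset (Fin n)))) = {toQ (b i)} := by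
    simp
  rwa [himg] at this

lemma empty_cone_mem (hF : IsSmoothCompleteFan F) :
    coneGen (∅ : Set (Vec n)) ∈ F := by
  classical
  have h0 : (0 : Vec n) ∈ ⋃₀ F := by rw [hF.covers]; trivial
  obtain ⟨σ, hσ, -⟩ := h0
  obtain ⟨b, I, hrep⟩ := hF.smooth σ hσ
  have := face_mem hF hσ b I hrep (J := ∅) (Finset.empty_subset I)
  simpa using this

lemma mem_ray_iff {v w : Vec n} : w ∈ coneGen {v} ↔ ∃ c : ℚ, 0 ≤ c ∧ w = c • v := by
  constructor
  · rintro ⟨T, c, hT, hc, rfl⟩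
    have hT' : T ⊆ {v} := by
      intro t ht; simpa using hT ht
    rcases Finset.subset_singleton_iff.mp hT' with h | h
    · exact ⟨0, le_refl 0, by simp [h]⟩
    · exact ⟨c v, hc v, by simp [h]⟩
  · rintro ⟨c, hc, rfl⟩
    refine ⟨{v}, fun t => if t = v then c else 0, by simp, ?_, by simp⟩
    intro t; by_cases h : t = v <;> simp [h, hc]

/-- Two primitive integral vectors that are positive rational multiples of each
other are equal. -/
lemma primitive_eq_of_pos_multiple {x y : LVec n} (hx : IsPrimitive x) (hy : IsPrimitive y)
    {c : ℚ} (hc : 0 < c) (h : toQ y = c • toQ x) : y = x := by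
  classical
  set s : ℤ := c.num with hs
  set t : ℤ := (c.den : ℤ) with ht
  have hspos : 0 < s := Rat.num_pos.mpr hc
  have htpos : 0 < t := by positivity
  have hZeq : t • y = s • x := by
    apply toQ_inj
    rw [toQ_zsmul, toQ_zsmul, h, smul_smul]
    congr 1
    rw [ht, hs]
    push_cast
    rw [mul_comm]
    exact_mod_cast Rat.mul_den_eq_num c
  have hcomp : ∀ k, t * y k = s * x k := fun k => congrFun hZeq k
  have hcop : IsCoprime t s := by
    rw [Int.isCoprime_iff_gcd_eq_one, Int.gcd]
    have h := (c.reduced).symm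
    simpa [hs, ht, Nat.Coprime] using h
  -- t divides every coordinate of x
  have hdvd : ∀ k, t ∣ x k := by
    intro k
    have : t ∣ s * x k := ⟨y k, (hcomp k).symm⟩
    exact (IsCoprime.dvd_of_dvd_mul_left hcop this)
  have hxw : x = t • (fun k => x k / t : LVec n) := by
    funext k
    have := Int.ediv_mul_cancel (hdvd k)
    simpa [Pi.smul_apply, smul_eq_mul, mul_comm] using this.symm
  have ht1 : t = 1 := by
    have := hx.2 t _ hxw
    rcases Int.isUnit_iff.mp this with h1 | h1
    · exact h1
    · omega
  rw [ht1, one_smul] at hZeq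
  have hs1 : s = 1 := by
    have := hy.2 s x hZeq
    rcases Int.isUnit_iff.mp this with h1 | h1
    · exact h1
    · omega
  rw [hs1, one_smul] at hZeq
  exact hZeq

/-! ### Lemma R : a ray generator lying in a smooth cone is one of its basis vectors -/

lemma gen_mem_basis (hF : IsSmoothCompleteFan F) {σ : Set (Vec n)} (hσ : σ ∈ F)
    (b : Module.Basis (Fin n) ℤ (LVec n)) (I : Finset (Fin n))
    (hrep : σ = coneGen (toQ '' (⇑b '' ↑I))) {x : LVec n} (hx : x ∈ gens F)
    (hxσ : toQ x ∈ σ) : ∃ i ∈ I, b i = x := by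
  classical
  set ray := coneGen ({toQ x} : Set (Vec n)) with hraydef
  have hray : ray ∈ F := hx.2
  -- step 1 : ray ⊆ σ
  have hsub : ray ⊆ σ := by
    obtain ⟨ℓ, hℓ, hface⟩ := (hF.inter σ hσ ray hray).2
    have hxmem : toQ x ∈ σ ∩ ray := ⟨hxσ, mem_coneGen_self rfl⟩
    have hlx : ℓ (toQ x) = 0 := by
      rw [hface] at hxmem
      exact hxmem.2
    intro w hw
    obtain ⟨c, hc, rfl⟩ := mem_ray_iff.mp hw
    have : c • toQ x ∈ σ ∩ ray := by
      rw [hface]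
      refine ⟨mem_ray_iff.mpr ⟨c, hc, rfl⟩, by rw [map_smul, hlx, smul_eq_mul, mul_zero]⟩
    exact this.1
  -- step 2 : ray is a face of σ
  obtain ⟨m, hm, hmeq⟩ := (hF.inter σ hσ ray hray).1
  have hinter : σ ∩ ray = ray := Set.inter_eq_self_of_subset_right hsub
  rw [hinter] at hmeq
  -- step 3 : find a basis vector on the ray
  have hxσ' := hxσ
  rw [hrep, mem_cone_iff_coords] at hxσ'
  have hxne : toQ x ≠ 0 := fun h => hx.1.1 (toQ_eq_zero_iff.mp h)
  have hexj : ∃ j, (qb b).repr (toQ x) j ≠ 0 := by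
    by_contra hno
    push_neg at hno
    apply hxne
    have := Module.Basis.sum_repr (qb b) (toQ x)
    rw [← this]
    exact Finset.sum_eq_zero fun j _ => by rw [hno j, zero_smul]
  obtain ⟨j, hj⟩ := hexj
  have hjI : j ∈ I := by
    by_contra h
    exact hj (hxσ'.2 j h)
  have hjpos : 0 < (qb b).repr (toQ x) j := lt_of_le_of_ne (hxσ'.1 j) (Ne.symm hj)
  have hxdec : toQ x = ∑ i ∈ I, ((qb b).repr (toQ x) i) • qb b i := by
    conv_lhs => rw [← Module.Basis.sum_repr (qb b) (toQ x)]
    rw [Finset.sum_subset (Finset.subset_univ I)]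
    intro i _ hi
    rw [hxσ'.2 i hi, zero_smul]
  have hbmem : ∀ i ∈ I, qb b i ∈ σ := by
    intro i hi
    rw [qb_apply, hrep]
    exact mem_coneGen_self ⟨b i, ⟨i, hi, rfl⟩, rfl⟩
  have hmx : m (toQ x) = 0 := by
    have : toQ x ∈ ray := mem_coneGen_self rfl
    rw [hmeq] at this
    exact this.2
  have hterms : ∀ i ∈ I, 0 ≤ ((qb b).repr (toQ x) i) * m (qb b i) := by
    intro i hi
    exact mul_nonneg (hxσ'.1 i) (hm _ (hbmem i hi))
  have hsum0 : ∑ i ∈ I, ((qb b).repr (toQ x) i) * m (qb b i) = 0 := by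
    have : m (toQ x) = ∑ i ∈ I, ((qb b).repr (toQ x) i) * m (qb b i) := by
      conv_lhs => rw [hxdec]
      rw [map_sum]
      exact Finset.sum_congr rfl fun i _ => by rw [map_smul, smul_eq_mul]
    rw [← this, hmx]
  have hterm0 := (Finset.sum_eq_zero_iff_of_nonneg hterms).mp hsum0
  have hmj : m (qb b j) = 0 := by
    have := hterm0 j hjI
    rcases mul_eq_zero.mp this with h | h
    · exact absurd h hj
    · exact h
  have hbj_ray : qb b j ∈ ray := by
    rw [hmeq]
    exact ⟨hbmem j hjI, hmj⟩
  obtain ⟨c, hc, hcx⟩ := mem_ray_iff.mp hbj_ray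
  have hcpos : 0 < c := by
    rcases lt_or_eq_of_le hc with h | h
    · exact h
    · exfalso
      apply b.ne_zero j
      apply toQ_inj
      rw [toQ_zero]
      rw [qb_apply] at hcx
      rw [hcx, ← h, zero_smul]
  rw [qb_apply] at hcx
  exact ⟨j, hjI, primitive_eq_of_pos_multiple hx.1 (basis_primitive b j) hcpos hcx⟩

/-! ### Relative interior points force cone containment -/

lemma relint_subset (hF : IsSmoothCompleteFan F) {A : Finset (LVec n)} {σ₂ : Set (Vec n)}
    (h1 : coneGen (toQ '' ↑A) ∈ F) (h2 : σ₂ ∈ F) {c : LVec n → ℚ}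
    (hc : ∀ x ∈ A, 0 < c x) (hp : (∑ x ∈ A, c x • toQ x) ∈ σ₂) :
    coneGen (toQ '' ↑A) ⊆ σ₂ := by
  classical
  obtain ⟨ℓ, hℓ, hface⟩ := (hF.inter _ h1 _ h2).1
  have hpσ1 : (∑ x ∈ A, c x • toQ x) ∈ coneGen (toQ '' ↑A) :=
    sum_mem_coneGen A c fun x hx => (hc x hx).le
  have hl0 : ℓ (∑ x ∈ A, c x • toQ x) = 0 := by
    have : (∑ x ∈ A, c x • toQ x) ∈ coneGen (toQ '' ↑A) ∩ σ₂ := ⟨hpσ1, hp⟩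
    rw [hface] at this
    exact this.2
  have hgen : ∀ x ∈ A, toQ x ∈ coneGen (toQ '' ↑A) := fun x hx =>
    mem_coneGen_self ⟨x, hx, rfl⟩
  have hsum : ∑ x ∈ A, c x * ℓ (toQ x) = 0 := by
    rw [← hl0, map_sum]
    exact Finset.sum_congr rfl fun x _ => by rw [map_smul, smul_eq_mul]
  have hterm : ∀ x ∈ A, ℓ (toQ x) = 0 := by
    intro x hx
    have h0 := (Finset.sum_eq_zero_iff_of_nonneg
      (fun y hy => mul_nonneg (hc y hy).le (hℓ _ (hgen y hy)))).mp hsum x hx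
    rcases mul_eq_zero.mp h0 with h | h
    · exact absurd h (ne_of_gt (hc x hx))
    · exact h
  intro w hw
  obtain ⟨cw, hcw, rfl⟩ := rep_of_mem_coneGen hw
  have : (∑ x ∈ A, cw x • toQ x) ∈ coneGen (toQ '' ↑A) ∩ σ₂ := by
    rw [hface]
    refine ⟨hw, ?_⟩
    rw [map_sum]
    exact Finset.sum_eq_zero fun x hx => by rw [map_smul, hterm x hx, smul_eq_mul, mul_zero]
  exact this.2

/-! ### Canonical generating set, subcones -/

lemma gen_set_canonical (hF : IsSmoothCompleteFan F) {σ : Set (Vec n)} (hσ : σ ∈ F)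
    (b : Module.Basis (Fin n) ℤ (LVec n)) (I : Finset (Fin n))
    (hrep : σ = coneGen (toQ '' (⇑b '' ↑I))) {B : Finset (LVec n)}
    (hB : ↑B ⊆ gens F) (hBrep : σ = coneGen (toQ '' ↑B)) : B = I.image b := by
  classical
  have hBsub : B ⊆ I.image b := by
    intro x hxB
    have hxσ : toQ x ∈ σ := by
      rw [hBrep]
      exact mem_coneGen_self ⟨x, hxB, rfl⟩
    obtain ⟨i, hi, rfl⟩ := gen_mem_basis hF hσ b I hrep (hB hxB) hxσ
    exact Finset.mem_image_of_mem b hi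
  refine Finset.Subset.antisymm hBsub ?_
  intro x hx
  obtain ⟨i, hiI, rfl⟩ := Finset.mem_image.mp hx
  by_contra hbi
  have hv : toQ (b i) ∈ σ := by
    rw [hrep]
    exact mem_coneGen_self ⟨b i, ⟨i, hiI, rfl⟩, rfl⟩
  rw [hBrep] at hv
  obtain ⟨c, hc, hveq⟩ := rep_of_mem_coneGen hv
  have := congrArg (fun w => (qb b).repr w i) hveq
  simp only [map_sum] at this
  rw [Finsupp.finset_sum_apply] at this
  have hL : (qb b).repr (toQ (b i)) i = 1 := by
    rw [← qb_apply, Module.Basis.repr_self]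
    simp
  have hR : ∀ x ∈ B, ((qb b).repr (c x • toQ x)) i = 0 := by
    intro x hxB
    obtain ⟨k, hkI, hbk⟩ := Finset.mem_image.mp (hBsub hxB)
    have hki : k ≠ i := by
      intro h
      rw [h] at hbk
      rw [← hbk] at hxB
      exact hbi hxB
    rw [map_smul, ← hbk, ← qb_apply, Module.Basis.repr_self]
    simp [Finsupp.single_apply, hki]
  rw [hL, Finset.sum_eq_zero hR] at this
  exact one_ne_zero this

lemma subcone_mem (hF : IsSmoothCompleteFan F) {σ : Set (Vec n)} (hσ : σ ∈ F)
    {A : Finset (LVec n)} (hA : ↑A ⊆ gens F) (hAσ : ∀ x ∈ A, toQ x ∈ σ) :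
    coneGen (toQ '' ↑A) ∈ F := by
  classical
  obtain ⟨b, I, hrep⟩ := hF.smooth σ hσ
  set J := I.filter (fun i => b i ∈ A) with hJ
  have himg : ⇑b '' ↑J = (↑A : Set (LVec n)) := by
    ext x
    constructor
    · rintro ⟨i, hi, rfl⟩
      rw [hJ] at hi
      simp only [Finset.coe_filter, Set.mem_setOf_eq] at hi
      exact hi.2
    · intro hx
      obtain ⟨i, hiI, rfl⟩ := gen_mem_basis hF hσ b I hrep (hA hx) (hAσ _ hx)
      refine ⟨i, ?_, rfl⟩
      simp only [hJ, Finset.coe_filter, Set.mem_setOf_eq]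
      exact ⟨hiI, Finset.mem_coe.mp hx⟩
  have := face_mem hF hσ b I hrep (J := J) (Finset.filter_subset _ _)
  rwa [himg] at this

/-! ### Completeness: positive integral representation of integer vectors -/

lemma exists_pos_rep (hF : IsSmoothCompleteFan F) (q : LVec n) :
    ∃ (Y : Finset (LVec n)) (a : LVec n → ℤ), ↑Y ⊆ gens F ∧ coneGen (toQ '' ↑Y) ∈ F ∧
      (∀ y ∈ Y, 0 < a y) ∧ (∑ y ∈ Y, a y • y) = q := by
  classical
  have hq : toQ q ∈ ⋃₀ F := by rw [hF.covers]; trivial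
  obtain ⟨σ, hσ, hqσ⟩ := hq
  obtain ⟨b, I, hrep⟩ := hF.smooth σ hσ
  rw [hrep, mem_cone_iff_coords] at hqσ
  set J := Finset.univ.filter (fun i => (b.repr q) i ≠ 0) with hJdef
  have hJI : J ⊆ I := by
    intro i hi
    rw [hJdef, Finset.mem_filter] at hi
    by_contra hiI
    apply hi.2
    have := hqσ.2 i hiI
    rw [qb_repr_toQ] at this
    exact_mod_cast this
  refine ⟨J.image b, fun v => ∑ i ∈ J.filter (fun i => b i = v), (b.repr q) i, ?_, ?_, ?_, ?_⟩
  · intro x hx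
    obtain ⟨i, hi, rfl⟩ := Finset.mem_image.mp (Finset.mem_coe.mp hx)
    exact basis_mem_gens hF hσ b I hrep (hJI hi)
  · have := face_mem hF hσ b I hrep hJI
    rwa [cone_coe_image] at this
  · intro y hy
    obtain ⟨i, hi, rfl⟩ := Finset.mem_image.mp hy
    have hfil : J.filter (fun k => b k = b i) = {i} := by
      ext k
      simp only [Finset.mem_filter, Finset.mem_singleton]
      constructor
      · rintro ⟨_, h⟩; exact b.injective h
      · rintro rfl; exact ⟨hi, rfl⟩
    show 0 < ∑ k ∈ J.filter (fun k => b k = b i), (b.repr q) k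
    rw [hfil, Finset.sum_singleton]
    have h1 : ((b.repr q) i : ℚ) = (qb b).repr (toQ q) i := (qb_repr_toQ b q i).symm
    have h2 : (0:ℚ) ≤ ((b.repr q) i : ℚ) := by rw [h1]; exact hqσ.1 i
    have h3 : (b.repr q) i ≠ 0 := by
      rw [hJdef, Finset.mem_filter] at hi; exact hi.2
    have : (0:ℤ) ≤ (b.repr q) i := by exact_mod_cast h2
    omega
  · rw [Finset.sum_image (fun x hx y hy h => b.injective h)]
    have hterm : ∀ i ∈ J, (∑ k ∈ J.filter (fun k => b k = b i), (b.repr q) k) • b i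
        = (b.repr q) i • b i := by
      intro i hi
      congr 1
      have hfil : J.filter (fun k => b k = b i) = {i} := by
        ext k
        simp only [Finset.mem_filter, Finset.mem_singleton]
        constructor
        · rintro ⟨_, h⟩; exact b.injective h
        · rintro rfl; exact ⟨hi, rfl⟩
      rw [hfil, Finset.sum_singleton]
    rw [Finset.sum_congr rfl hterm]
    calc ∑ i ∈ J, (b.repr q) i • b i
        = ∑ i : Fin n, (b.repr q) i • b i := by
          refine Finset.sum_subset (Finset.subset_univ J) ?_
          intro i _ hi
          rw [hJdef] at hi
          simp only [Finset.mem_filter, Finset.mem_univ, true_and, not_not] at hi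
          rw [hi, zero_smul]
      _ = q := Module.Basis.sum_repr b q

/-! ### Extraction of a primitive collection -/

lemma exists_primcol_aux (hF : IsSmoothCompleteFan F) :
    ∀ (k : ℕ) (D : Finset (LVec n)), D.card ≤ k → ↑D ⊆ gens F →
      coneGen (toQ '' ↑D) ∉ F → ∃ P ⊆ D, IsPrimCol F P := by
  classical
  intro k
  induction k with
  | zero =>
    intro D hcard hD hne
    have : D = ∅ := Finset.card_eq_zero.mp (Nat.le_zero.mp hcard)
    subst this
    exfalso
    apply hne
    simpa using empty_cone_mem hF
  | succ k ih =>
    intro D hcard hD hne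
    by_cases h : ∀ x ∈ D, coneGen (toQ '' ↑(D.erase x)) ∈ F
    · exact ⟨D, Finset.Subset.refl D, hD, hne, h⟩
    · push_neg at h
      obtain ⟨x, hx, hbad⟩ := h
      have hcard' : (D.erase x).card ≤ k := by
        rw [Finset.card_erase_of_mem hx]
        omega
      have hsub : ↑(D.erase x) ⊆ gens F :=
        fun y hy => hD (Finset.mem_coe.mpr (Finset.mem_of_mem_erase (Finset.mem_coe.mp hy)))
      obtain ⟨P, hP, hPcol⟩ := ih (D.erase x) hcard' hsub hbad
      exact ⟨P, hP.trans (Finset.erase_subset x D), hPcol⟩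

lemma exists_primcol_subset (hF : IsSmoothCompleteFan F) {D : Finset (LVec n)}
    (hD : ↑D ⊆ gens F) (hne : coneGen (toQ '' ↑D) ∉ F) : ∃ P ⊆ D, IsPrimCol F P :=
  exists_primcol_aux hF D.card D (le_refl _) hD hne

/-! ### The base case : two disjoint positive representations in cones of the fan -/

lemma base_lemma (hF : IsSmoothCompleteFan F) {D E : Finset (LVec n)}
    (hDE : Disjoint D E) (hDg : ↑D ⊆ gens F) (hEg : ↑E ⊆ gens F)
    {d e : LVec n → ℤ} (hd : ∀ x ∈ D, 1 ≤ d x) (he : ∀ y ∈ E, 1 ≤ e y)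
    (heq : ∑ x ∈ D, d x • x = ∑ y ∈ E, e y • y)
    (hE : coneGen (toQ '' ↑E) ∈ F) (hD : coneGen (toQ '' ↑D) ∈ F) :
    D = ∅ ∧ E = ∅ := by
  classical
  obtain ⟨b, I, hrep⟩ := hF.smooth _ hE
  -- the relative interior point of cone(D) lies in cone(E)
  have htoQ : ∑ x ∈ D, ((d x : ℚ)) • toQ x = ∑ y ∈ E, ((e y : ℚ)) • toQ y := by
    have h1 : toQ (∑ x ∈ D, d x • x) = ∑ x ∈ D, ((d x : ℚ)) • toQ x := by
      rw [toQ_sum]; exact Finset.sum_congr rfl fun x _ => toQ_zsmul _ _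
    have h2 : toQ (∑ y ∈ E, e y • y) = ∑ y ∈ E, ((e y : ℚ)) • toQ y := by
      rw [toQ_sum]; exact Finset.sum_congr rfl fun y _ => toQ_zsmul _ _
    rw [← h1, ← h2, heq]
  have hpE : (∑ x ∈ D, ((d x : ℚ)) • toQ x) ∈ coneGen (toQ '' ↑E) := by
    rw [htoQ]
    refine sum_mem_coneGen E _ fun y hy => ?_
    have h := he y hy
    have : (0:ℤ) ≤ e y := by omega
    exact_mod_cast this
  have hsub : coneGen (toQ '' (D : Set (LVec n))) ⊆ coneGen (toQ '' (E : Set (LVec n))) := by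
    refine relint_subset hF hD hE (c := fun x => (d x : ℚ)) (fun x hx => ?_) hpE
    show (0:ℚ) < (d x : ℚ)
    exact_mod_cast hd x hx
  have hDbase : ∀ x ∈ D, ∃ i ∈ I, b i = x := by
    intro x hx
    refine gen_mem_basis hF hE b I hrep (hDg hx) (hsub ?_)
    exact mem_coneGen_self ⟨x, hx, rfl⟩
  have hEbase : ∀ y ∈ E, ∃ i ∈ I, b i = y := by
    intro y hy
    refine gen_mem_basis hF hE b I hrep (hEg hy) ?_
    exact mem_coneGen_self ⟨y, hy, rfl⟩
  have hrepr : ∀ (x : LVec n) (ix : Fin n), b ix = x → ∀ k,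
      (b.repr x) k = if ix = k then 1 else 0 := by
    intro x ix hx k
    rw [← hx, Module.Basis.repr_self]
    simp [Finsupp.single_apply]
  have key : ∀ z ∈ D, False := by
    intro z hz
    obtain ⟨iz, hizI, hbiz⟩ := hDbase z hz
    have := congrArg (fun w => (b.repr w) iz) heq
    simp only [map_sum, Finsupp.finset_sum_apply, map_smul, Finsupp.smul_apply,
      smul_eq_mul] at this
    have hL : ∑ x ∈ D, d x * (b.repr x) iz = d z := by
      rw [Finset.sum_eq_single z]
      · obtain ⟨_, _, h⟩ := hDbase z hz
        rw [hrepr z iz hbiz iz, if_pos rfl, mul_one]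
      · intro x hx hne
        obtain ⟨ix, _, hbix⟩ := hDbase x hx
        rw [hrepr x ix hbix iz, if_neg, mul_zero]
        intro h
        rw [h] at hbix
        rw [hbiz] at hbix
        exact hne hbix.symm
      · intro h; exact absurd hz h
    have hR : ∑ y ∈ E, e y * (b.repr y) iz = 0 := by
      refine Finset.sum_eq_zero fun y hy => ?_
      obtain ⟨iy, _, hbiy⟩ := hEbase y hy
      rw [hrepr y iy hbiy iz, if_neg, mul_zero]
      intro h
      rw [h] at hbiy
      rw [hbiz] at hbiy
      rw [← hbiy] at hy
      exact (Finset.disjoint_left.mp hDE hz) hy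
    rw [hL, hR] at this
    have := hd z hz
    omega
  have hDempty : D = ∅ := by
    by_contra h
    obtain ⟨z, hz⟩ := Finset.nonempty_of_ne_empty h
    exact key z hz
  subst hDempty
  simp only [Finset.sum_empty] at heq
  constructor
  · rfl
  · by_contra h
    obtain ⟨z, hz⟩ := Finset.nonempty_of_ne_empty h
    obtain ⟨iz, hizI, hbiz⟩ := hEbase z hz
    have := congrArg (fun w => (b.repr w) iz) heq
    simp only [map_sum, Finsupp.finset_sum_apply, map_smul, Finsupp.smul_apply,
      smul_eq_mul, map_zero, Finsupp.zero_apply] at this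
    have hR : ∑ y ∈ E, e y * (b.repr y) iz = e z := by
      rw [Finset.sum_eq_single z]
      · rw [hrepr z iz hbiz iz, if_pos rfl, mul_one]
      · intro y hy hne
        obtain ⟨iy, _, hbiy⟩ := hEbase y hy
        rw [hrepr y iy hbiy iz, if_neg, mul_zero]
        intro h
        rw [h] at hbiy
        rw [hbiz] at hbiy
        exact hne hbiy.symm
      · intro h; exact absurd hz h
    rw [hR] at this
    have := he z hz
    omega

/-! ### The main defect estimate (induction using Fano hypothesis) -/

lemma main_defect (hF : IsSmoothCompleteFan F) (hFano : IsFano F) :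
    ∀ (M : ℕ) (D E : Finset (LVec n)) (d e : LVec n → ℤ),
      (∑ x ∈ D, d x).toNat ≤ M →
      Disjoint D E → ↑D ⊆ gens F → ↑E ⊆ gens F →
      (∀ x ∈ D, 1 ≤ d x) → (∀ y ∈ E, 1 ≤ e y) →
      (∑ x ∈ D, d x • x) = (∑ y ∈ E, e y • y) →
      coneGen (toQ '' (E : Set (LVec n))) ∈ F →
      coneGen (toQ '' (D : Set (LVec n))) ∉ F →
      1 ≤ (∑ x ∈ D, d x) - (∑ y ∈ E, e y) := by
  classical
  intro M
  induction M with
  | zero =>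
    intro D E d e hM _ _ _ hd _ _ _ hDF
    exfalso
    have hDne : D ≠ ∅ := by
      intro h; subst h; apply hDF; simpa using empty_cone_mem hF
    obtain ⟨x, hx⟩ := Finset.nonempty_of_ne_empty hDne
    have h1 : (1:ℤ) ≤ ∑ x ∈ D, d x := by
      calc (1:ℤ) ≤ d x := hd x hx
        _ ≤ ∑ x ∈ D, d x :=
          Finset.single_le_sum (f := d) (fun y hy => le_trans (by norm_num) (hd y hy)) hx
    omega
  | succ M ih =>
    intro D E d e hM hDE hDg hEg hd he heq hEF hDF
    obtain ⟨P, hPD, hPcol⟩ := exists_primcol_subset hF hDg hDF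
    obtain ⟨Y, a, hYg, hYF, hapos, hYsum⟩ := exists_pos_rep hF (∑ x ∈ P, x)
    have hPR : HasPrimRel F P Y a := ⟨hYg, hYF, hapos, hYsum.symm⟩
    have hdeg : (0:ℤ) < (P.card : ℤ) - ∑ y ∈ Y, a y := hFano P Y a hPcol hPR
    set f : LVec n → ℤ := fun z =>
      (if z ∈ D then d z else 0) + (if z ∈ Y then a z else 0)
        - (if z ∈ P then 1 else 0) with hfdef
    set g : LVec n → ℤ := fun z => if z ∈ E then e z else 0 with hgdef
    set m : LVec n → ℤ := fun z => min (f z) (g z) with hmdef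
    set W : Finset (LVec n) := (D ∪ Y) ∪ E with hWdef
    have hDW : D ⊆ W := (Finset.subset_union_left).trans Finset.subset_union_left
    have hYW : Y ⊆ W := (Finset.subset_union_right).trans Finset.subset_union_left
    have hEW : E ⊆ W := Finset.subset_union_right
    have hPW : P ⊆ W := hPD.trans hDW
    have haY : ∀ z, 0 ≤ (if z ∈ Y then a z else 0) := by
      intro z
      by_cases hzY : z ∈ Y
      · simp only [if_pos hzY]; exact (hapos z hzY).le
      · simp [hzY]
    have hf0 : ∀ z, 0 ≤ f z := by
      intro z
      have h2 := haY z
      by_cases hzP : z ∈ P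
      · have hzD : z ∈ D := hPD hzP
        have h1 := hd z hzD
        simp only [hfdef, if_pos hzP, if_pos hzD]
        omega
      · have h1 : 0 ≤ (if z ∈ D then d z else 0) := by
          by_cases hzD : z ∈ D
          · simp only [if_pos hzD]; have := hd z hzD; omega
          · simp [hzD]
        simp only [hfdef, if_neg hzP]
        omega
    have hg0 : ∀ z, 0 ≤ g z := by
      intro z
      by_cases hzE : z ∈ E
      · simp only [hgdef, if_pos hzE]; have := he z hzE; omega
      · simp [hgdef, hzE]
    have hm0 : ∀ z, 0 ≤ m z := fun z => le_min (hf0 z) (hg0 z)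
    -- vector sum helper
    have hite : ∀ (A : Finset (LVec n)), A ⊆ W → ∀ (c : LVec n → ℤ),
        (∑ z ∈ W, (if z ∈ A then c z else 0) • z) = ∑ z ∈ A, c z • z := by
      intro A hA c
      have h := Finset.sum_subset hA
        (f := fun z => (if z ∈ A then c z else 0) • z) (by intro x _ hx; simp [hx])
      rw [← h]
      exact Finset.sum_congr rfl fun z hz => by simp [hz]
    have hites : ∀ (A : Finset (LVec n)), A ⊆ W → ∀ (c : LVec n → ℤ),
        (∑ z ∈ W, (if z ∈ A then c z else 0)) = ∑ z ∈ A, c z := by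
      intro A hA c
      have h := Finset.sum_subset hA
        (f := fun z => (if z ∈ A then c z else 0)) (by intro x _ hx; simp [hx])
      rw [← h]
      exact Finset.sum_congr rfl fun z hz => by simp [hz]
    have hone : ∑ z ∈ P, (1:ℤ) • z = ∑ z ∈ P, z := by
      exact Finset.sum_congr rfl fun z _ => one_smul _ _
    have hiteD : ∑ z ∈ W, (if z ∈ D then d z else 0) • z = ∑ z ∈ D, d z • z :=
      hite D hDW d
    have hiteY : ∑ z ∈ W, (if z ∈ Y then a z else 0) • z = ∑ z ∈ Y, a z • z :=
      hite Y hYW a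
    have hiteP : ∑ z ∈ W, (if z ∈ P then (1:ℤ) else 0) • z = ∑ z ∈ P, (1:ℤ) • z :=
      hite P hPW (fun _ => (1:ℤ))
    have hiteE : ∑ z ∈ W, (if z ∈ E then e z else 0) • z = ∑ z ∈ E, e z • z :=
      hite E hEW e
    have S1 : ∑ z ∈ W, f z • z = ∑ z ∈ W, g z • z := by
      have hfz : ∀ z ∈ W, f z • z
          = (if z ∈ D then d z else 0) • z + (if z ∈ Y then a z else 0) • z
            - (if z ∈ P then (1:ℤ) else 0) • z := by
        intro z _
        simp only [hfdef]
        rw [sub_smul, add_smul]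
      rw [Finset.sum_congr rfl hfz, Finset.sum_sub_distrib, Finset.sum_add_distrib,
        hiteD, hiteY, hiteP, hgdef, hiteE, heq, hYsum, hone]
      abel
    have S2 : ∑ z ∈ W, (f z - m z) • z = ∑ z ∈ W, (g z - m z) • z := by
      have h1 : ∀ (c : LVec n → ℤ), ∑ z ∈ W, (c z - m z) • z
          = (∑ z ∈ W, c z • z) - ∑ z ∈ W, m z • z := by
        intro c
        rw [← Finset.sum_sub_distrib]
        exact Finset.sum_congr rfl fun z _ => sub_smul _ _ _
      rw [h1, h1, S1]
    set D' : Finset (LVec n) := W.filter (fun z => f z - m z ≠ 0) with hD'def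
    set E' : Finset (LVec n) := W.filter (fun z => g z - m z ≠ 0) with hE'def
    have S3 : ∑ z ∈ D', (f z - m z) • z = ∑ z ∈ W, (f z - m z) • z := by
      refine Finset.sum_subset (Finset.filter_subset _ _) ?_
      intro z hz hnz
      rw [hD'def, Finset.mem_filter] at hnz
      push_neg at hnz
      rw [hnz hz, zero_smul]
    have S4 : ∑ z ∈ E', (g z - m z) • z = ∑ z ∈ W, (g z - m z) • z := by
      refine Finset.sum_subset (Finset.filter_subset _ _) ?_
      intro z hz hnz
      rw [hE'def, Finset.mem_filter] at hnz
      push_neg at hnz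
      rw [hnz hz, zero_smul]
    have heq' : ∑ z ∈ D', (f z - m z) • z = ∑ z ∈ E', (g z - m z) • z := by
      rw [S3, S4, S2]
    -- scalar identities
    have T1 : ∑ z ∈ W, f z = (∑ x ∈ D, d x) + (∑ y ∈ Y, a y) - (P.card : ℤ) := by
      have hitesD : (∑ z ∈ W, if z ∈ D then d z else 0) = ∑ z ∈ D, d z :=
        hites D hDW d
      have hitesY : (∑ z ∈ W, if z ∈ Y then a z else 0) = ∑ z ∈ Y, a z :=
        hites Y hYW a
      have hitesP : (∑ z ∈ W, if z ∈ P then (1:ℤ) else 0) = ∑ z ∈ P, (1:ℤ) :=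
        hites P hPW (fun _ => (1:ℤ))
      have hfz : ∀ z ∈ W, f z
          = (if z ∈ D then d z else 0) + (if z ∈ Y then a z else 0)
            - (if z ∈ P then (1:ℤ) else 0) := fun z _ => rfl
      rw [Finset.sum_congr rfl hfz, Finset.sum_sub_distrib, Finset.sum_add_distrib,
        hitesD, hitesY, hitesP]
      simp
    have T2 : ∑ z ∈ W, g z = ∑ y ∈ E, e y := by
      rw [hgdef, hites E hEW e]
    have T3 : ∑ z ∈ D', (f z - m z) = (∑ z ∈ W, f z) - ∑ z ∈ W, m z := by
      have h : ∑ z ∈ D', (f z - m z) = ∑ z ∈ W, (f z - m z) := by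
        refine Finset.sum_subset (Finset.filter_subset _ _) ?_
        intro z hz hnz
        rw [hD'def, Finset.mem_filter] at hnz
        push_neg at hnz
        exact hnz hz
      rw [h, Finset.sum_sub_distrib]
    have T4 : ∑ z ∈ E', (g z - m z) = (∑ z ∈ W, g z) - ∑ z ∈ W, m z := by
      have h : ∑ z ∈ E', (g z - m z) = ∑ z ∈ W, (g z - m z) := by
        refine Finset.sum_subset (Finset.filter_subset _ _) ?_
        intro z hz hnz
        rw [hE'def, Finset.mem_filter] at hnz
        push_neg at hnz
        exact hnz hz
      rw [h, Finset.sum_sub_distrib]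
    have hWm : (0:ℤ) ≤ ∑ z ∈ W, m z := Finset.sum_nonneg fun z _ => hm0 z
    -- the new datum
    have hdisj' : Disjoint D' E' := by
      rw [Finset.disjoint_left]
      intro z hz1 hz2
      rw [hD'def, Finset.mem_filter] at hz1
      rw [hE'def, Finset.mem_filter] at hz2
      rcases le_total (f z) (g z) with h | h
      · exact hz1.2 (by rw [hmdef]; simp [min_eq_left h])
      · exact hz2.2 (by rw [hmdef]; simp [min_eq_right h])
    have hD'DY : D' ⊆ D ∪ Y := by
      intro z hz
      rw [hD'def, Finset.mem_filter] at hz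
      by_contra hzDY
      have hzD : z ∉ D := fun h => hzDY (Finset.mem_union_left _ h)
      have hzY : z ∉ Y := fun h => hzDY (Finset.mem_union_right _ h)
      have hzP : z ∉ P := fun h => hzD (hPD h)
      have hfz : f z = 0 := by simp [hfdef, hzD, hzY, hzP]
      have hmz : m z = 0 := by
        rw [hmdef]
        simp only [hfz]
        exact min_eq_left (hg0 z)
      exact hz.2 (by rw [hfz, hmz, sub_zero])
    have hD'g : ↑D' ⊆ gens F := by
      intro z hz
      rcases Finset.mem_union.mp (hD'DY (Finset.mem_coe.mp hz)) with h | h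
      · exact hDg h
      · exact hYg h
    have hE'E : E' ⊆ E := by
      intro z hz
      rw [hE'def, Finset.mem_filter] at hz
      by_contra hzE
      have hgz : g z = 0 := by simp [hgdef, hzE]
      have hmz : m z = 0 := by
        rw [hmdef]
        simp only [hgz]
        exact min_eq_right (hf0 z)
      exact hz.2 (by rw [hgz, hmz, sub_zero])
    have hE'g : ↑E' ⊆ gens F := fun z hz => hEg (hE'E (Finset.mem_coe.mp hz))
    have hd' : ∀ z ∈ D', 1 ≤ f z - m z := by
      intro z hz
      rw [hD'def, Finset.mem_filter] at hz
      have h1 : m z ≤ f z := min_le_left _ _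
      have := hz.2
      omega
    have he' : ∀ z ∈ E', 1 ≤ g z - m z := by
      intro z hz
      rw [hE'def, Finset.mem_filter] at hz
      have h1 : m z ≤ g z := min_le_right _ _
      have := hz.2
      omega
    have hE'F : coneGen (toQ '' (E' : Set (LVec n))) ∈ F := by
      refine subcone_mem hF hEF hE'g ?_
      intro x hx
      exact mem_coneGen_self ⟨x, hE'E hx, rfl⟩
    have hsumD : (1:ℤ) ≤ ∑ x ∈ D, d x := by
      have hDne : D ≠ ∅ := by
        intro h; subst h; apply hDF; simpa using empty_cone_mem hF
      obtain ⟨x, hx⟩ := Finset.nonempty_of_ne_empty hDne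
      calc (1:ℤ) ≤ d x := hd x hx
        _ ≤ ∑ x ∈ D, d x :=
          Finset.single_le_sum (f := d) (fun y hy => le_trans (by norm_num) (hd y hy)) hx
    have hMle : (∑ x ∈ D, d x) ≤ (M:ℤ) + 1 := by
      have := Int.toNat_le.mp hM
      exact_mod_cast this
    have hM' : (∑ z ∈ D', (f z - m z)).toNat ≤ M := by
      rw [Int.toNat_le]
      rw [T3, T1]
      push_cast
      omega
    by_cases hD'F : coneGen (toQ '' (D' : Set (LVec n))) ∈ F
    · obtain ⟨hD'e, hE'e⟩ :=
        base_lemma hF hdisj' hD'g hE'g hd' he' heq' hE'F hD'F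
      have hz1 : ∑ z ∈ D', (f z - m z) = 0 := by rw [hD'e]; simp
      have hz2 : ∑ z ∈ E', (g z - m z) = 0 := by rw [hE'e]; simp
      rw [T3, T1] at hz1
      rw [T4, T2] at hz2
      omega
    · have hIH := ih D' E' (fun z => f z - m z) (fun z => g z - m z) hM' hdisj'
        hD'g hE'g hd' he' heq' hE'F hD'F
      rw [T3, T4, T1, T2] at hIH
      omega

/-! ### Linearity of the degree map -/

noncomputable def degL : (LVec n →₀ ℚ) →ₗ[ℚ] ℚ :=
  Finsupp.lsum ℚ (fun _ : LVec n => (LinearMap.id : ℚ →ₗ[ℚ] ℚ))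

lemma degMap_eq_degL (r : LVec n →₀ ℚ) : degMap r = degL r := rfl

lemma degMap_single (x : LVec n) (c : ℚ) : degMap (Finsupp.single x c) = c := by
  rw [degMap_eq_degL, degL]
  simp

lemma degMap_sum_smul (G : Finset (LVec n →₀ ℚ)) (c : (LVec n →₀ ℚ) → ℚ) :
    degMap (∑ w ∈ G, c w • w) = ∑ w ∈ G, c w * degMap w := by
  rw [degMap_eq_degL, map_sum]
  exact Finset.sum_congr rfl fun w _ => by rw [map_smul, smul_eq_mul, degMap_eq_degL]

lemma degMap_wall {U : Finset (LVec n)} {u u' : LVec n} {bv : LVec n → ℤ}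
    (huU : u ∉ U) (hu'U : u' ∉ U) (huu' : u ≠ u') :
    degMap ((Finsupp.single u 1 + Finsupp.single u' 1
      - ∑ v ∈ U, Finsupp.single v (bv v : ℚ)) : LVec n →₀ ℚ)
    = 2 - ∑ v ∈ U, (bv v : ℚ) := by
  rw [degMap_eq_degL]
  rw [map_sub, map_add, map_sum]
  have h1 : ∀ x c, degL (Finsupp.single x c : LVec n →₀ ℚ) = c := by
    intro x c; rw [← degMap_eq_degL]; exact degMap_single x c
  rw [h1, h1]
  have h2 : ∑ v ∈ U, degL (Finsupp.single v ((bv v : ℚ)) : LVec n →₀ ℚ)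
      = ∑ v ∈ U, (bv v : ℚ) := Finset.sum_congr rfl fun v _ => h1 v _
  rw [h2]
  ring

/-! ### Wall relations have positive degree under the Fano hypothesis -/

lemma wall_deg_pos (hF : IsSmoothCompleteFan F) (hFano : IsFano F)
    {r : LVec n →₀ ℚ} (hw : IsWallRel F r) : (1:ℚ) ≤ degMap r := by
  classical
  obtain ⟨U, u, u', bv, hUg, hUcard, hug, hu'g, huU, hu'U, huu', hUF, hσF, hσ'F,
    hrel, hreq⟩ := hw
  rw [hreq, degMap_wall huU hu'U huu']
  set Ep : Finset (LVec n) := U.filter (fun v => 0 < bv v) with hEpdef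
  set Un : Finset (LVec n) := U.filter (fun v => bv v < 0) with hUndef
  set D : Finset (LVec n) := insert u (insert u' Un) with hDdef
  set d : LVec n → ℤ := fun z => if z = u ∨ z = u' then 1 else -(bv z) with hddef
  have hu'notin : u' ∉ Un := fun h => hu'U (Finset.mem_of_mem_filter _ h)
  have hunotin : u ∉ insert u' Un := by
    intro h
    rcases Finset.mem_insert.mp h with h | h
    · exact huu' h
    · exact huU (Finset.mem_of_mem_filter _ h)
  -- splitting the wall relation
  have hUnU : Un ⊆ U := Finset.filter_subset _ _
  have hEpU : Ep ⊆ U := Finset.filter_subset _ _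
  have hsplitv : ∑ v ∈ U, bv v • v
      = (∑ v ∈ Ep, bv v • v) + ∑ v ∈ Un, bv v • v := by
    rw [← Finset.sum_filter_add_sum_filter_not U (fun v => 0 < bv v)]
    congr 1
    refine (Finset.sum_subset ?_ ?_).symm
    · intro v hv
      rw [hUndef, Finset.mem_filter] at hv
      rw [Finset.mem_filter]
      exact ⟨hv.1, by omega⟩
    · intro v hv hnv
      rw [Finset.mem_filter] at hv
      rw [hUndef, Finset.mem_filter] at hnv
      have h1 : ¬ 0 < bv v := hv.2
      have h2 : ¬ bv v < 0 := fun h => hnv ⟨hv.1, h⟩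
      have : bv v = 0 := by omega
      rw [this, zero_smul]
  have hsplits : ∑ v ∈ U, bv v
      = (∑ v ∈ Ep, bv v) + ∑ v ∈ Un, bv v := by
    rw [← Finset.sum_filter_add_sum_filter_not U (fun v => 0 < bv v)]
    congr 1
    refine (Finset.sum_subset ?_ ?_).symm
    · intro v hv
      rw [hUndef, Finset.mem_filter] at hv
      rw [Finset.mem_filter]
      exact ⟨hv.1, by omega⟩
    · intro v hv hnv
      rw [Finset.mem_filter] at hv
      rw [hUndef, Finset.mem_filter] at hnv
      have h1 : ¬ 0 < bv v := hv.2
      have h2 : ¬ bv v < 0 := fun h => hnv ⟨hv.1, h⟩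
      omega
  have hdUn : ∀ v ∈ Un, d v = -(bv v) := by
    intro v hv
    have hvU : v ∈ U := hUnU hv
    have h1 : v ≠ u := fun h => huU (h ▸ hvU)
    have h2 : v ≠ u' := fun h => hu'U (h ▸ hvU)
    simp [hddef, h1, h2]
  have heqD : ∑ z ∈ D, d z • z = ∑ v ∈ Ep, bv v • v := by
    rw [hDdef, Finset.sum_insert hunotin, Finset.sum_insert hu'notin]
    have hdu : d u = 1 := by simp [hddef]
    have hdu' : d u' = 1 := by simp [hddef]
    rw [hdu, hdu', one_smul, one_smul]
    have : ∑ z ∈ Un, d z • z = ∑ z ∈ Un, (-(bv z)) • z :=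
      Finset.sum_congr rfl fun z hz => by rw [hdUn z hz]
    rw [this]
    have hUn' : ∑ z ∈ Un, (-(bv z)) • z = - ∑ z ∈ Un, bv z • z := by
      rw [← Finset.sum_neg_distrib]
      exact Finset.sum_congr rfl fun z _ => by rw [neg_smul]
    rw [hUn']
    calc u + (u' + -∑ z ∈ Un, bv z • z)
        = (u + u') - ∑ z ∈ Un, bv z • z := by abel
      _ = ((∑ v ∈ Ep, bv v • v) + ∑ v ∈ Un, bv v • v) - ∑ z ∈ Un, bv z • z := by
          rw [hrel, hsplitv]
      _ = ∑ v ∈ Ep, bv v • v := by abel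
  have hsumD : ∑ z ∈ D, d z = 2 + ∑ v ∈ Un, (-(bv v)) := by
    rw [hDdef, Finset.sum_insert hunotin, Finset.sum_insert hu'notin]
    have hdu : d u = 1 := by simp [hddef]
    have hdu' : d u' = 1 := by simp [hddef]
    rw [hdu, hdu']
    have : ∑ z ∈ Un, d z = ∑ z ∈ Un, (-(bv z)) :=
      Finset.sum_congr rfl fun z hz => by rw [hdUn z hz]
    rw [this]
    ring
  have hdisj : Disjoint D Ep := by
    rw [Finset.disjoint_left]
    intro z hzD hzE
    have hzU : z ∈ U := hEpU hzE
    rw [hDdef] at hzD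
    rcases Finset.mem_insert.mp hzD with h | h
    · exact huU (h ▸ hzU)
    · rcases Finset.mem_insert.mp h with h | h
      · exact hu'U (h ▸ hzU)
      · rw [hUndef, Finset.mem_filter] at h
        rw [hEpdef, Finset.mem_filter] at hzE
        omega
  have hDg : ↑D ⊆ gens F := by
    intro z hz
    rw [hDdef] at hz
    simp only [Finset.coe_insert, Set.mem_insert_iff, Finset.mem_coe] at hz
    rcases hz with h | h | h
    · exact h ▸ hug
    · exact h ▸ hu'g
    · exact hUg (hUnU h)
  have hEg : ↑Ep ⊆ gens F := fun z hz => hUg (hEpU (Finset.mem_coe.mp hz))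
  have hd1 : ∀ z ∈ D, 1 ≤ d z := by
    intro z hz
    rw [hDdef] at hz
    rcases Finset.mem_insert.mp hz with h | h
    · simp [hddef, h]
    · rcases Finset.mem_insert.mp h with h | h
      · simp [hddef, h]
      · rw [hdUn z h]
        rw [hUndef, Finset.mem_filter] at h
        omega
  have he1 : ∀ z ∈ Ep, 1 ≤ bv z := by
    intro z hz
    rw [hEpdef, Finset.mem_filter] at hz
    omega
  have hEpF : coneGen (toQ '' (Ep : Set (LVec n))) ∈ F := by
    refine subcone_mem hF hσF hEg ?_
    intro x hx
    exact mem_coneGen_self ⟨x, by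
      simp only [Finset.coe_insert, Set.mem_insert_iff, Finset.mem_coe]
      exact Or.inr (hEpU hx), rfl⟩
  have hDnF : coneGen (toQ '' (D : Set (LVec n))) ∉ F := by
    intro hDF
    obtain ⟨hDe, -⟩ := base_lemma hF hdisj hDg hEg hd1 he1 heqD hEpF hDF
    have : u ∈ D := by rw [hDdef]; exact Finset.mem_insert_self _ _
    rw [hDe] at this
    exact absurd this (Finset.notMem_empty u)
  have hmain := main_defect hF hFano (∑ z ∈ D, d z).toNat D Ep d bv
    (le_refl _) hdisj hDg hEg hd1 he1 heqD hEpF hDnF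
  -- conclude
  rw [hsumD] at hmain
  have hZ : ∑ v ∈ U, bv v ≤ 1 := by
    have h := hsplits
    have hnegsum : ∑ v ∈ Un, (-(bv v)) = - ∑ v ∈ Un, bv v := by
      rw [← Finset.sum_neg_distrib]
    rw [hnegsum] at hmain
    omega
  have hQ : (∑ v ∈ U, (bv v : ℚ)) ≤ 1 := by
    have : ((∑ v ∈ U, bv v : ℤ) : ℚ) ≤ ((1:ℤ):ℚ) := by exact_mod_cast hZ
    push_cast at this
    exact_mod_cast this
  linarith

/-! ### Backward direction -/

lemma backward_dir (hF : IsSmoothCompleteFan F) (hFano : IsFano F) :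
    ∀ r ∈ MoriCone F, r ≠ 0 → 0 < degMap r := by
  classical
  rintro r ⟨G, c, hG, hc, rfl⟩ hne
  rw [degMap_sum_smul]
  have hwall : ∀ w ∈ G, IsWallRel F w := fun w hw => hG hw
  have hterm : ∀ w ∈ G, 0 ≤ c w * degMap w := fun w hw =>
    mul_nonneg (hc w) (le_trans (by norm_num) (wall_deg_pos hF hFano (hwall w hw)))
  have hex : ∃ w ∈ G, c w ≠ 0 := by
    by_contra hno
    push_neg at hno
    exact hne (Finset.sum_eq_zero fun w hw => by rw [hno w hw, zero_smul])
  obtain ⟨w0, hw0, hc0⟩ := hex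
  refine Finset.sum_pos' hterm ⟨w0, hw0, ?_⟩
  exact mul_pos (lt_of_le_of_ne (hc w0) (Ne.symm hc0))
    (lt_of_lt_of_le (by norm_num) (wall_deg_pos hF hFano (hwall w0 hw0)))

/-! ### Forward direction : wall bound from positivity on the Mori cone -/

lemma wall_sum_le (HM : ∀ r ∈ MoriCone F, r ≠ 0 → 0 < degMap r)
    {U : Finset (LVec n)} {u u' : LVec n} {bv : LVec n → ℤ}
    (huU : u ∉ U) (hu'U : u' ∉ U) (huu' : u ≠ u')
    (hw : IsWallRel F (Finsupp.single u 1 + Finsupp.single u' 1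
      - ∑ v ∈ U, Finsupp.single v (bv v : ℚ))) :
    ∑ v ∈ U, bv v ≤ 1 := by
  classical
  set r : LVec n →₀ ℚ := Finsupp.single u 1 + Finsupp.single u' 1
    - ∑ v ∈ U, Finsupp.single v (bv v : ℚ) with hrdef
  have hrM : r ∈ MoriCone F := by
    refine ⟨{r}, fun w => if w = r then 1 else 0, ?_, ?_, ?_⟩
    · intro w hw'
      simp only [Finset.coe_singleton, Set.mem_singleton_iff] at hw'
      subst hw'
      exact hw
    · intro w
      by_cases h : w = r <;> simp [h]
    · simp
  have hru : r u = 1 := by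
    rw [hrdef]
    simp only [Finsupp.sub_apply, Finsupp.add_apply]
    rw [Finsupp.single_apply, Finsupp.single_apply, if_pos rfl,
      if_neg (Ne.symm huu'), Finsupp.finset_sum_apply]
    have : ∀ v ∈ U, (Finsupp.single v ((bv v : ℚ))) u = 0 := by
      intro v hv
      rw [Finsupp.single_apply, if_neg]
      intro h; subst h; exact huU hv
    rw [Finset.sum_congr rfl this]
    simp
  have hrne : r ≠ 0 := by
    intro h
    rw [h] at hru
    simp at hru
  have hpos := HM r hrM hrne
  rw [hrdef, degMap_wall huU hu'U huu'] at hpos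
  have hQ : (∑ v ∈ U, (bv v : ℚ)) < 2 := by linarith
  have hZ : ((∑ v ∈ U, bv v : ℤ) : ℚ) < ((2:ℤ):ℚ) := by
    push_cast
    exact hQ
  have : (∑ v ∈ U, bv v) < 2 := by exact_mod_cast hZ
  omega

/-! ### The coordinate-sum functional of a chamber -/

/-- Sum of coordinates with respect to (the rationalization of) an integral
basis. -/
noncomputable def Lsum (b : Module.Basis (Fin n) ℤ (LVec n)) (z : Vec n) : ℚ :=
  ∑ i, (qb b).repr z i

lemma Lsum_add (b : Module.Basis (Fin n) ℤ (LVec n)) (z w : Vec n) :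
    Lsum b (z + w) = Lsum b z + Lsum b w := by
  unfold Lsum
  rw [← Finset.sum_add_distrib]
  exact Finset.sum_congr rfl fun i _ => by rw [map_add]; rfl

lemma Lsum_smul (b : Module.Basis (Fin n) ℤ (LVec n)) (c : ℚ) (z : Vec n) :
    Lsum b (c • z) = c * Lsum b z := by
  unfold Lsum
  rw [Finset.mul_sum]
  exact Finset.sum_congr rfl fun i _ => by rw [map_smul]; rfl

lemma Lsum_sum {α : Type*} (b : Module.Basis (Fin n) ℤ (LVec n)) (A : Finset α) (w : α → Vec n) :
    Lsum b (∑ x ∈ A, w x) = ∑ x ∈ A, Lsum b (w x) := by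
  classical
  induction A using Finset.induction with
  | empty => simp [Lsum]
  | @insert a s h ih =>
    rw [Finset.sum_insert h, Finset.sum_insert h, Lsum_add, ih]

lemma Lsum_basisvec (b : Module.Basis (Fin n) ℤ (LVec n)) {x : LVec n} (hx : ∃ i, b i = x) :
    Lsum b (toQ x) = 1 := by
  classical
  obtain ⟨i₀, rfl⟩ := hx
  unfold Lsum
  rw [← qb_apply, Module.Basis.repr_self]
  simp [Finsupp.single_apply]

/-! ### Chambers -/

/-- A chamber : a full-dimensional cone of the fan. -/
def IsChamber (F : Set (Set (Vec n))) (σ : Set (Vec n)) : Prop :=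
  σ ∈ F ∧ ∃ b : Module.Basis (Fin n) ℤ (LVec n),
    σ = coneGen (toQ '' (⇑b '' ↑(Finset.univ : Finset (Fin n))))

open Classical in
/-- A chosen integral basis spanning a chamber. -/
noncomputable def chBasis (σ : Set (Vec n)) : Module.Basis (Fin n) ℤ (LVec n) :=
  if h : ∃ b : Module.Basis (Fin n) ℤ (LVec n),
      σ = coneGen (toQ '' (⇑b '' ↑(Finset.univ : Finset (Fin n)))) then
    h.choose
  else (Pi.basisFun ℤ (Fin n))

lemma chBasis_spec {σ : Set (Vec n)} (h : IsChamber F σ) :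
    σ = coneGen (toQ '' (⇑(chBasis σ) '' ↑(Finset.univ : Finset (Fin n)))) := by
  classical
  rw [chBasis]
  rw [dif_pos h.2]
  exact h.2.choose_spec

/-- The canonical generating set of a chamber. -/
noncomputable def canonB (σ : Set (Vec n)) : Finset (LVec n) :=
  Finset.univ.image (chBasis σ)

lemma chamber_rep {σ : Set (Vec n)} (h : IsChamber F σ) :
    σ = coneGen (toQ '' (canonB σ : Set (LVec n))) := by
  rw [canonB, Finset.coe_image]
  exact chBasis_spec h

lemma chamber_gens (hF : IsSmoothCompleteFan F) {σ : Set (Vec n)} (h : IsChamber F σ) :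
    ↑(canonB σ) ⊆ gens F := by
  intro x hx
  obtain ⟨i, -, rfl⟩ := Finset.mem_image.mp (Finset.mem_coe.mp hx)
  exact basis_mem_gens hF h.1 (chBasis σ) Finset.univ (chBasis_spec h) (Finset.mem_univ i)

lemma mem_chamber_iff {σ : Set (Vec n)} (h : IsChamber F σ) (z : Vec n) :
    z ∈ σ ↔ ∀ i, 0 ≤ (qb (chBasis σ)).repr z i := by
  constructor
  · intro hz
    have hz' : z ∈ coneGen (toQ '' (⇑(chBasis σ) '' ↑(Finset.univ : Finset (Fin n)))) := by
      rw [← chBasis_spec h]; exact hz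
    exact ((mem_cone_iff_coords _ _ _).mp hz').1
  · intro h'
    have : z ∈ coneGen (toQ '' (⇑(chBasis σ) '' ↑(Finset.univ : Finset (Fin n)))) :=
      (mem_cone_iff_coords _ _ _).mpr ⟨h', fun i hi => absurd (Finset.mem_univ i) hi⟩
    rw [chBasis_spec h]
    exact this

lemma gen_mem_canonB (hF : IsSmoothCompleteFan F) {σ : Set (Vec n)} (h : IsChamber F σ)
    {x : LVec n} (hx : x ∈ gens F) (hxσ : toQ x ∈ σ) : x ∈ canonB σ := by
  obtain ⟨i, -, rfl⟩ := gen_mem_basis hF h.1 (chBasis σ) Finset.univ (chBasis_spec h) hx hxσ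
  exact Finset.mem_image_of_mem _ (Finset.mem_univ i)

/-! ### Pigeonhole and limit lemmas -/

lemma pigeonhole_cone (hF : IsSmoothCompleteFan F) (q : ℕ → Vec n) :
    ∃ ρ ∈ F, {m : ℕ | q m ∈ ρ}.Infinite := by
  by_contra h
  push_neg at h
  have hcov : (Set.univ : Set ℕ) ⊆ ⋃ ρ ∈ F, {m : ℕ | q m ∈ ρ} := by
    intro m _
    have : q m ∈ ⋃₀ F := by rw [hF.covers]; trivial
    obtain ⟨ρ, hρ, hm⟩ := this
    exact Set.mem_biUnion hρ hm
  have hfin : (⋃ ρ ∈ F, {m : ℕ | q m ∈ ρ}).Finite :=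
    Set.Finite.biUnion hF.finite fun ρ hρ => (h ρ hρ)
  exact Set.infinite_univ (Set.Finite.subset hfin hcov)

lemma cone_subset_span (S : Set (Vec n)) : coneGen S ⊆ Submodule.span ℚ S := by
  rintro z ⟨T, c, hT, -, rfl⟩
  refine Submodule.sum_mem _ fun s hs => ?_
  exact Submodule.smul_mem _ _ (Submodule.subset_span (hT hs))

lemma limit_mem (hF : IsSmoothCompleteFan F) {ρ : Set (Vec n)} (hρ : ρ ∈ F)
    {w v : Vec n} {M : Set ℕ} (hM : M.Infinite)
    (hmem : ∀ m ∈ M, w + (1/((m:ℚ)+1)) • v ∈ ρ) : w ∈ ρ := by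
  classical
  obtain ⟨b, I, hrep⟩ := hF.smooth ρ hρ
  rw [hrep]
  rw [mem_cone_iff_coords]
  have hcoord : ∀ (m : ℕ), (qb b).repr (w + (1/((m:ℚ)+1)) • v)
      = (qb b).repr w + (1/((m:ℚ)+1)) • (qb b).repr v := by
    intro m
    rw [map_add, map_smul]
  have hcm : ∀ m ∈ M, ∀ i, (qb b).repr (w + (1/((m:ℚ)+1)) • v) i
      = (qb b).repr w i + (1/((m:ℚ)+1)) * (qb b).repr v i := by
    intro m _ i
    rw [hcoord]
    rfl
  constructor
  · intro i
    by_contra hneg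
    push_neg at hneg
    by_cases hv : (qb b).repr v i ≤ 0
    · obtain ⟨m, hm⟩ := hM.nonempty
      have h1 := (mem_cone_iff_coords b I _).mp (hrep ▸ hmem m hm)
      have h2 := h1.1 i
      rw [hcm m hm i] at h2
      have hfrac : (0:ℚ) < 1/((m:ℚ)+1) := by positivity
      nlinarith
    · push_neg at hv
      set cval : ℚ := (qb b).repr v i / (-(qb b).repr w i) with hcval
      obtain ⟨m, hm, hmgt⟩ := hM.exists_gt ⌈cval⌉₊
      have h1 := (mem_cone_iff_coords b I _).mp (hrep ▸ hmem m hm)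
      have h2 := h1.1 i
      rw [hcm m hm i] at h2
      have hfrac : (0:ℚ) < (m:ℚ)+1 := by positivity
      have hgt : cval < (m:ℚ) + 1 := by
        calc cval ≤ (⌈cval⌉₊ : ℚ) := Nat.le_ceil cval
          _ < (m:ℚ) := by exact_mod_cast hmgt
          _ < (m:ℚ) + 1 := by linarith
      have hwneg : 0 < -(qb b).repr w i := by linarith
      have : (qb b).repr v i < ((m:ℚ)+1) * (-(qb b).repr w i) := by
        rw [hcval] at hgt
        calc (qb b).repr v i
            = ((qb b).repr v i / (-(qb b).repr w i)) * (-(qb b).repr w i) :=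
              (div_mul_cancel₀ _ (ne_of_gt hwneg)).symm
          _ < ((m:ℚ)+1) * (-(qb b).repr w i) := by
              exact mul_lt_mul_of_pos_right hgt hwneg
      have h3 : (1/((m:ℚ)+1)) * (qb b).repr v i < -(qb b).repr w i := by
        rw [div_mul_eq_mul_div, one_mul, div_lt_iff₀ hfrac]
        linarith [this]
      linarith
  · intro i hi
    obtain ⟨m₁, hm₁⟩ := hM.nonempty
    obtain ⟨m₂, hm₂⟩ := (hM.diff (Set.finite_singleton m₁)).nonempty
    have hm₂M : m₂ ∈ M := hm₂.1
    have hm₁₂ : m₂ ≠ m₁ := by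
      intro h; exact hm₂.2 (by rw [h]; rfl)
    have h1 := ((mem_cone_iff_coords b I _).mp (hrep ▸ hmem m₁ hm₁)).2 i hi
    have h2 := ((mem_cone_iff_coords b I _).mp (hrep ▸ hmem m₂ hm₂M)).2 i hi
    rw [hcm m₁ hm₁ i] at h1
    rw [hcm m₂ hm₂M i] at h2
    have hne : (1/((m₁:ℚ)+1)) ≠ (1/((m₂:ℚ)+1)) := by
      intro h
      have h1' : ((m₁:ℚ)+1) ≠ 0 := by positivity
      have h2' : ((m₂:ℚ)+1) ≠ 0 := by positivity
      rw [div_eq_div_iff h1' h2'] at h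
      have : (m₁:ℚ) = (m₂:ℚ) := by linarith
      exact hm₁₂ (by exact_mod_cast this.symm)
    have hv0 : (qb b).repr v i = 0 := by
      by_contra hv
      apply hne
      have e1 : (1/((m₁:ℚ)+1)) * (qb b).repr v i = (1/((m₂:ℚ)+1)) * (qb b).repr v i := by
        linarith
      exact mul_right_cancel₀ hv e1
    rw [hv0] at h1
    linarith

/-! ### Every cone of the fan is contained in a chamber -/

lemma ext_aux (hF : IsSmoothCompleteFan F) :
    ∀ (k : ℕ) (σ : Set (Vec n)), σ ∈ F →
      ∀ (b : Module.Basis (Fin n) ℤ (LVec n)) (I : Finset (Fin n)),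
        σ = coneGen (toQ '' (⇑b '' ↑I)) → n - I.card ≤ k →
        ∃ τ, IsChamber F τ ∧ σ ⊆ τ := by
  classical
  intro k
  induction k with
  | zero =>
    intro σ hσ b I hrep hk
    have hle : I.card ≤ n := by
      have := Finset.card_le_card (Finset.subset_univ I)
      simpa [Finset.card_univ] using this
    have hcard : I.card = n := by omega
    have hIuniv : I = Finset.univ := (Finset.card_eq_iff_eq_univ I).mp (by simp [hcard])
    exact ⟨σ, ⟨hσ, b, by rw [hrep, hIuniv]⟩, subset_refl σ⟩
  | succ k ih =>
    intro σ hσ b I hrep hk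
    by_cases hIu : I = Finset.univ
    · exact ⟨σ, ⟨hσ, b, by rw [hrep, hIu]⟩, subset_refl σ⟩
    · have hj : ∃ j, j ∉ I := by
        by_contra h; push_neg at h; exact hIu (Finset.eq_univ_iff_forall.mpr h)
      obtain ⟨j, hjI⟩ := hj
      set p₀ : Vec n := ∑ i ∈ I, toQ (b i) with hp₀def
      obtain ⟨ρ, hρF, hMinf⟩ :=
        pigeonhole_cone hF (fun m => p₀ + (1/((m:ℚ)+1)) • toQ (b j))
      have hp₀ρ : p₀ ∈ ρ :=
        limit_mem hF hρF hMinf (fun m hm => hm)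
      have hσ' : coneGen (toQ '' ((I.image b : Finset (LVec n)) : Set (LVec n))) ∈ F := by
        rw [← cone_coe_image, ← hrep]; exact hσ
      have hσsub : σ ⊆ ρ := by
        have hpt : (∑ x ∈ I.image b, (1:ℚ) • toQ x) = p₀ := by
          rw [Finset.sum_image (fun x hx y hy h => b.injective h), hp₀def]
          exact Finset.sum_congr rfl fun i _ => one_smul _ _
        have := relint_subset hF hσ' hρF (c := fun _ => (1:ℚ))
          (fun x _ => one_pos) (by rw [hpt]; exact hp₀ρ)
        rw [hrep, cone_coe_image]
        exact this
      obtain ⟨b₁, I₁, hrep₁⟩ := hF.smooth ρ hρF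
      have hjspan : toQ (b j) ∈ Submodule.span ℚ (toQ '' (⇑b₁ '' ↑I₁)) := by
        obtain ⟨m₁, hm₁⟩ := hMinf.nonempty
        have h1 : p₀ + (1/((m₁:ℚ)+1)) • toQ (b j)
            ∈ Submodule.span ℚ (toQ '' (⇑b₁ '' ↑I₁)) := by
          refine cone_subset_span _ ?_
          rw [← hrep₁]
          exact hm₁
        have h2 : p₀ ∈ Submodule.span ℚ (toQ '' (⇑b₁ '' ↑I₁)) := by
          refine cone_subset_span _ ?_
          rw [← hrep₁]
          exact hp₀ρ
        have hrw : toQ (b j)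
            = ((m₁:ℚ)+1) • ((p₀ + (1/((m₁:ℚ)+1)) • toQ (b j)) - p₀) := by
          rw [add_sub_cancel_left, smul_smul]
          have : ((m₁:ℚ)+1) * (1/((m₁:ℚ)+1)) = 1 := by
            field_simp
          rw [this, one_smul]
        rw [hrw]
        exact Submodule.smul_mem _ _ (Submodule.sub_mem _ h1 h2)
      have hdim : I.card + 1 ≤ I₁.card := by
        set K : Finset (Fin n) := insert j I with hKdef
        have hli : LinearIndependent ℚ (fun i : {x // x ∈ K} => qb b i.val) :=
          (qb b).linearIndependent.comp _ Subtype.val_injective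
        have hrange : Set.range (fun i : {x // x ∈ K} => qb b i.val)
            ⊆ (Submodule.span ℚ (toQ '' (⇑b₁ '' ↑I₁)) : Set (Vec n)) := by
          rintro _ ⟨i, rfl⟩
          show qb b i.val ∈ (Submodule.span ℚ (toQ '' (⇑b₁ '' ↑I₁)) : Set (Vec n))
          rcases Finset.mem_insert.mp i.2 with h | h
          · rw [qb_apply, h]
            exact hjspan
          · rw [qb_apply]
            refine cone_subset_span _ ?_
            rw [← hrep₁]
            refine hσsub ?_
            rw [hrep]
            exact mem_coneGen_self ⟨b i.val, ⟨i.val, h, rfl⟩, rfl⟩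
        have h1 : Module.finrank ℚ
            (Submodule.span ℚ (Set.range (fun i : {x // x ∈ K} => qb b i.val)))
            = K.card := by
          rw [finrank_span_eq_card hli]
          simp
        have h2 : Submodule.span ℚ (Set.range (fun i : {x // x ∈ K} => qb b i.val))
            ≤ Submodule.span ℚ (toQ '' (⇑b₁ '' ↑I₁)) :=
          Submodule.span_le.mpr hrange
        have h3 := Submodule.finrank_mono h2
        have h4 : Module.finrank ℚ (Submodule.span ℚ (toQ '' (⇑b₁ '' ↑I₁))) ≤ I₁.card := by
          have himg : toQ '' (⇑b₁ '' ↑I₁) = (((I₁.image b₁).image toQ : Finset (Vec n)) : Set (Vec n)) := by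
            rw [Finset.coe_image, Finset.coe_image]
          rw [himg]
          calc Module.finrank ℚ (Submodule.span ℚ (((I₁.image b₁).image toQ : Finset (Vec n)) : Set (Vec n)))
              ≤ ((I₁.image b₁).image toQ).card := finrank_span_finset_le_card _
            _ ≤ (I₁.image b₁).card := Finset.card_image_le
            _ ≤ I₁.card := Finset.card_image_le
        have hKcard : K.card = I.card + 1 := Finset.card_insert_of_notMem hjI
        omega
      obtain ⟨τ, hτ, hρτ⟩ := ih ρ hρF b₁ I₁ hrep₁ (by omega)
      exact ⟨τ, hτ, hσsub.trans hρτ⟩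

lemma exists_chamber (hF : IsSmoothCompleteFan F) {σ : Set (Vec n)} (hσ : σ ∈ F) :
    ∃ τ, IsChamber F τ ∧ σ ⊆ τ := by
  obtain ⟨b, I, hrep⟩ := hF.smooth σ hσ
  exact ext_aux hF n σ hσ b I hrep (by omega)

lemma exists_coeff {γ : Type*} [Zero γ] {K : Finset (Fin n)} {g : Fin n → LVec n}
    (hinj : ∀ k ∈ K, ∀ l ∈ K, g k = g l → k = l) (c : Fin n → γ) :
    ∃ c' : LVec n → γ, ∀ k ∈ K, c' (g k) = c k := by
  classical
  refine ⟨fun x => if h : ∃ k, k ∈ K ∧ g k = x then c h.choose else 0, ?_⟩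
  intro k hk
  have hex : ∃ l, l ∈ K ∧ g l = g k := ⟨k, hk, rfl⟩
  have hsp := hex.choose_spec
  have heq : hex.choose = k := hinj _ hsp.1 _ hk hsp.2
  simp only [dif_pos hex, heq]

/-! ### The wall-crossing construction -/

lemma wall_from_chamber (hF : IsSmoothCompleteFan F)
    (HM : ∀ r ∈ MoriCone F, r ≠ 0 → 0 < degMap r)
    {σ : Set (Vec n)} (hσch : IsChamber F σ) {z : Vec n} (hz : z ∉ σ) :
    ∃ (σ' : Set (Vec n)) (i₀ : Fin n) (u' : LVec n),
      IsChamber F σ' ∧ ((qb (chBasis σ)).repr z i₀ < 0) ∧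
      u' ∈ canonB σ' ∧
      ((chBasis σ).repr u' i₀ = -1) ∧
      (∀ k, k ≠ i₀ → (chBasis σ) k ∈ canonB σ') ∧
      (∑ k ∈ Finset.univ.erase i₀, (chBasis σ).repr u' k) ≤ 1 := by
  classical
  set b : Module.Basis (Fin n) ℤ (LVec n) := chBasis σ with hbdef
  set lam : Fin n → ℚ := fun i => (qb b).repr z i with hlamdef
  have hneg : ∃ i, lam i < 0 := by
    by_contra h
    push_neg at h
    exact hz ((mem_chamber_iff hσch z).mpr h)
  set c : Fin n → ℚ := fun i => if lam i < 0 then ((i:ℕ)+1 : ℚ) * (-(lam i)) else 1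
    with hcdef
  have hc : ∀ i, 0 < c i := by
    intro i
    rw [hcdef]
    by_cases h : lam i < 0
    · simp only [if_pos h]
      have h1 : (0:ℚ) < ((i:ℕ)+1 : ℚ) := by positivity
      nlinarith
    · simp only [if_neg h]; norm_num
  set t : Fin n → ℚ := fun i => c i / (c i - lam i) with htdef
  have hcl : ∀ i, lam i < 0 → 0 < c i - lam i := fun i h => by
    have := hc i; linarith
  have htfrac : ∀ i, lam i < 0 → t i = ((i:ℕ)+1 : ℚ) / (((i:ℕ)+1 : ℚ) + 1) := by
    intro i h
    have hw : (0:ℚ) < -(lam i) := by linarith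
    rw [htdef]
    simp only [hcdef, if_pos h]
    rw [show ((i:ℕ)+1:ℚ) * (-(lam i)) - lam i = (((i:ℕ)+1:ℚ)+1) * (-(lam i)) by ring]
    rw [mul_div_mul_right _ _ (ne_of_gt hw)]
  have ht01 : ∀ i, lam i < 0 → 0 < t i ∧ t i < 1 := by
    intro i h
    rw [htfrac i h]
    constructor
    · positivity
    · rw [div_lt_one (by positivity)]
      linarith
  have htinj : ∀ i j, lam i < 0 → lam j < 0 → t i = t j → i = j := by
    intro i j hi hj hij
    rw [htfrac i hi, htfrac j hj] at hij
    have hi1 : (0:ℚ) < ((i:ℕ)+1:ℚ)+1 := by positivity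
    have hj1 : (0:ℚ) < ((j:ℕ)+1:ℚ)+1 := by positivity
    rw [div_eq_div_iff (ne_of_gt hi1) (ne_of_gt hj1)] at hij
    have hval : ((i:ℕ):ℚ) = ((j:ℕ):ℚ) := by nlinarith [hij]
    have : (i:ℕ) = (j:ℕ) := by exact_mod_cast hval
    exact Fin.val_injective this
  set S : Finset (Fin n) := Finset.univ.filter (fun i => lam i < 0) with hSdef
  have hSne : S.Nonempty := by
    obtain ⟨i, hi⟩ := hneg
    exact ⟨i, by rw [hSdef]; simp [hi]⟩
  obtain ⟨i₀, hi₀S, hmin⟩ := Finset.exists_min_image S t hSne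
  have hlam₀ : lam i₀ < 0 := by
    rw [hSdef, Finset.mem_filter] at hi₀S
    exact hi₀S.2
  set t₀ : ℚ := t i₀ with ht₀def
  have ht₀pos : 0 < t₀ := (ht01 i₀ hlam₀).1
  have ht₀lt1 : t₀ < 1 := (ht01 i₀ hlam₀).2
  have hstrict : ∀ j, lam j < 0 → j ≠ i₀ → t₀ < t j := by
    intro j hlamj hne
    have hjS : j ∈ S := by rw [hSdef, Finset.mem_filter]; exact ⟨Finset.mem_univ j, hlamj⟩
    rcases lt_or_eq_of_le (hmin j hjS) with h | h
    · exact h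
    · exact absurd (htinj i₀ j hlam₀ hlamj h) (Ne.symm hne)
  set p : Vec n := ∑ i, c i • qb b i with hpdef
  set v : Vec n := z - p with hvdef
  set w : Vec n := p + t₀ • v with hwdef
  have hreprp : ∀ i, (qb b).repr p i = c i := by
    intro i
    rw [hpdef, repr_sum_smul]
    simp
  have hreprv : ∀ i, (qb b).repr v i = lam i - c i := by
    intro i
    rw [hvdef, map_sub, Finsupp.sub_apply, hreprp]
  have hreprw : ∀ i, (qb b).repr w i = c i + t₀ * (lam i - c i) := by
    intro i
    rw [hwdef, map_add, map_smul, Finsupp.add_apply, Finsupp.smul_apply, hreprp,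
      hreprv, smul_eq_mul]
  have hw₀ : (qb b).repr w i₀ = 0 := by
    rw [hreprw, ht₀def, htdef]
    have h1 : c i₀ - lam i₀ ≠ 0 := ne_of_gt (hcl i₀ hlam₀)
    field_simp
    ring
  have hwpos : ∀ i, i ≠ i₀ → 0 < (qb b).repr w i := by
    intro i hne
    rw [hreprw]
    by_cases h : lam i < 0
    · have hexp : c i + t₀ * (lam i - c i) = (c i - lam i) * (t i - t₀) := by
        rw [htdef]
        have h1 : c i - lam i ≠ 0 := ne_of_gt (hcl i h)
        field_simp
        ring
      rw [hexp]
      exact mul_pos (hcl i h) (by linarith [hstrict i h hne])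
    · push_neg at h
      nlinarith [hc i, ht₀pos, ht₀lt1]
  obtain ⟨ρ, hρF, hMinf⟩ := pigeonhole_cone hF (fun m => w + (1/((m:ℚ)+1)) • v)
  have hwρ : w ∈ ρ := limit_mem hF hρF hMinf (fun m hm => hm)
  set A : Finset (LVec n) := (Finset.univ.erase i₀).image b with hAdef
  have hAim : (A : Set (LVec n)) = ⇑b '' ↑(Finset.univ.erase i₀) := by
    rw [hAdef, Finset.coe_image]
  have hGmem : coneGen (toQ '' (A : Set (LVec n))) ∈ F := by
    rw [hAim]
    exact face_mem hF hσch.1 b Finset.univ (chBasis_spec hσch) (Finset.erase_subset _ _)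
  have hbinj : ∀ k ∈ Finset.univ.erase i₀, ∀ l ∈ Finset.univ.erase i₀,
      b k = b l → k = l := fun k _ l _ h => b.injective h
  have hGsub : coneGen (toQ '' (A : Set (LVec n))) ⊆ ρ := by
    obtain ⟨c', hc'⟩ := exists_coeff hbinj (fun i => (qb b).repr w i)
    refine relint_subset hF hGmem hρF (c := c') ?_ ?_
    · intro x hx
      rw [hAdef] at hx
      obtain ⟨k, hk, rfl⟩ := Finset.mem_image.mp hx
      rw [hc' k hk]
      exact hwpos k (Finset.ne_of_mem_erase hk)
    · have h1 : ∑ x ∈ A, c' x • toQ x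
          = ∑ k ∈ Finset.univ.erase i₀, ((qb b).repr w k) • toQ (b k) := by
        rw [hAdef, Finset.sum_image hbinj]
        exact Finset.sum_congr rfl fun k hk => by rw [hc' k hk]
      rw [h1]
      have h2 : ∑ k ∈ Finset.univ.erase i₀, ((qb b).repr w k) • toQ (b k) = w := by
        have h3 : ∀ k ∈ Finset.univ.erase i₀,
            ((qb b).repr w k) • toQ (b k) = ((qb b).repr w k) • qb b k :=
          fun k _ => by rw [qb_apply]
        rw [Finset.sum_congr rfl h3]
        rw [Finset.sum_subset (Finset.erase_subset _ _)]
        · exact Module.Basis.sum_repr (qb b) w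
        · intro k _ hk
          have : k = i₀ := by
            by_contra h
            exact hk (Finset.mem_erase_of_ne_of_mem h (Finset.mem_univ k))
          rw [this, hw₀, zero_smul]
      rw [h2]
      exact hwρ
  obtain ⟨σ', hσ'ch, hρσ'⟩ := exists_chamber hF hρF
  have hAcan : ∀ x ∈ A, x ∈ canonB σ' := by
    intro x hx
    have hxg : x ∈ gens F := by
      rw [hAdef] at hx
      obtain ⟨k, hk, rfl⟩ := Finset.mem_image.mp hx
      exact basis_mem_gens hF hσch.1 b Finset.univ (chBasis_spec hσch) (Finset.mem_univ k)
    refine gen_mem_canonB hF hσ'ch hxg ?_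
    refine hρσ' (hGsub ?_)
    exact mem_coneGen_self ⟨x, Finset.mem_coe.mpr hx, rfl⟩
  obtain ⟨m₀, hm₀⟩ := hMinf.nonempty
  set qpt : Vec n := w + (1/((m₀:ℚ)+1)) • v with hqptdef
  have hqσ' : qpt ∈ σ' := hρσ' hm₀
  have hqneg : (qb b).repr qpt i₀ < 0 := by
    rw [hqptdef, map_add, map_smul, Finsupp.add_apply, Finsupp.smul_apply, hw₀,
      hreprv, smul_eq_mul]
    have h1 : (0:ℚ) < 1/((m₀:ℚ)+1) := by positivity
    have h2 : lam i₀ - c i₀ < 0 := by have := hc i₀; linarith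
    nlinarith
  set β : Module.Basis (Fin n) ℤ (LVec n) := chBasis σ' with hβdef
  set B' : Finset (LVec n) := canonB σ' with hB'def
  have hB'card : B'.card = n := by
    rw [hB'def, canonB, Finset.card_image_of_injective _ (chBasis σ').injective]
    simp
  set u : LVec n := b i₀ with hudef
  have hAsubB' : A ⊆ B' := fun x hx => hAcan x hx
  have hAcard : A.card = n - 1 := by
    rw [hAdef, Finset.card_image_of_injective _ b.injective,
      Finset.card_erase_of_mem (Finset.mem_univ i₀)]
    simp
  have hn1 : 1 ≤ n := by have := i₀.2; omega
  have hsdne : (B' \ A).Nonempty := by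
    rw [← Finset.card_pos, Finset.card_sdiff_of_subset hAsubB', hB'card, hAcard]
    omega
  obtain ⟨u', hu'⟩ := hsdne
  have hu'B' : u' ∈ B' := (Finset.mem_sdiff.mp hu').1
  have hu'A : u' ∉ A := (Finset.mem_sdiff.mp hu').2
  have hB'eq : insert u' A = B' := by
    refine Finset.eq_of_subset_of_card_le ?_ ?_
    · intro x hx
      rcases Finset.mem_insert.mp hx with h | h
      · exact h ▸ hu'B'
      · exact hAsubB' h
    · rw [Finset.card_insert_of_notMem hu'A, hB'card, hAcard]
      omega
  have huA : u ∉ A := by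
    rw [hAdef]
    intro h
    obtain ⟨k, hk, hbk⟩ := Finset.mem_image.mp h
    exact (Finset.ne_of_mem_erase hk) (b.injective hbk)
  have hBeq : insert u A = canonB σ := by
    rw [hudef, hAdef, canonB, ← Finset.image_insert,
      Finset.insert_erase (Finset.mem_univ i₀)]
  have hu'u : u' ≠ u := by
    intro h
    have hBB : B' = canonB σ := by rw [← hB'eq, h, hBeq]
    have hσ'σ : σ' = σ := by
      rw [chamber_rep hσ'ch, chamber_rep hσch, ← hB'def, hBB]
    rw [hσ'σ] at hqσ'
    have := (mem_chamber_iff hσch qpt).mp hqσ' i₀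
    linarith
  set rv : Fin n → ℤ := fun i => b.repr u' i with hrvdef
  -- find the index of u' in β
  have hu'im : ∃ j₀, β j₀ = u' := by
    rw [hB'def, canonB] at hu'B'
    obtain ⟨j₀, -, hj₀⟩ := Finset.mem_image.mp hu'B'
    exact ⟨j₀, hj₀⟩
  obtain ⟨j₀, hj₀⟩ := hu'im
  have hβcases : ∀ j, β j = u' ∨ ∃ k, k ≠ i₀ ∧ β j = b k := by
    intro j
    have : β j ∈ B' := by
      rw [hB'def, canonB]
      exact Finset.mem_image_of_mem _ (Finset.mem_univ j)
    rw [← hB'eq] at this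
    rcases Finset.mem_insert.mp this with h | h
    · exact Or.inl h
    · rw [hAdef] at h
      obtain ⟨k, hk, hbk⟩ := Finset.mem_image.mp h
      exact Or.inr ⟨k, Finset.ne_of_mem_erase hk, hbk.symm⟩
  have hreprb : ∀ k, k ≠ i₀ → (b.repr (b k)) i₀ = 0 := by
    intro k hk
    rw [Module.Basis.repr_self]
    simp [Finsupp.single_apply, hk]
  -- (a) rv i₀ is a unit
  have hudec : (u : LVec n) = ∑ j, (β.repr u j) • β j := (Module.Basis.sum_repr β u).symm
  have hunit : rv i₀ = 1 ∨ rv i₀ = -1 := by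
    have heval := congrArg (fun x => (b.repr x) i₀) hudec
    simp only [map_sum, Finsupp.finset_sum_apply, map_smul, Finsupp.smul_apply,
      smul_eq_mul] at heval
    have hL : (b.repr u) i₀ = 1 := by
      rw [hudef, Module.Basis.repr_self]
      simp
    have hRsum : ∑ j, (β.repr u j) * (b.repr (β j)) i₀ = (β.repr u j₀) * rv i₀ := by
      rw [Finset.sum_eq_single j₀]
      · rw [hj₀, hrvdef]
      · intro j _ hj
        rcases hβcases j with h | ⟨k, hk, hbk⟩
        · exact absurd (β.injective (h.trans hj₀.symm)) hj
        · rw [hbk, hreprb k hk, mul_zero]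
      · intro h
        exact absurd (Finset.mem_univ j₀) h
    rw [hL, hRsum] at heval
    have : IsUnit (rv i₀) := IsUnit.of_mul_eq_one (a := rv i₀) (β.repr u j₀)
      (by rw [mul_comm]; exact heval.symm)
    exact Int.isUnit_iff.mp this
  -- (b) sign of rv i₀
  have hrv₀ : rv i₀ = -1 := by
    rcases hunit with h1 | h1
    · exfalso
      have hqdec : qpt = ∑ j, ((qb β).repr qpt j) • qb β j := (Module.Basis.sum_repr (qb β) qpt).symm
      have hcoords := (mem_chamber_iff hσ'ch qpt).mp hqσ'
      have heval := congrArg (fun x => ((qb b).repr x) i₀) hqdec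
      simp only [map_sum, Finsupp.finset_sum_apply, map_smul, Finsupp.smul_apply,
        smul_eq_mul] at heval
      have hRsum : ∑ j, ((qb β).repr qpt j) * ((qb b).repr (qb β j)) i₀
          = ((qb β).repr qpt j₀) * ((rv i₀ : ℤ) : ℚ) := by
        rw [Finset.sum_eq_single j₀]
        · rw [qb_apply, hj₀, qb_repr_toQ, hrvdef]
        · intro j _ hj
          rcases hβcases j with h | ⟨k, hk, hbk⟩
          · exact absurd (β.injective (h.trans hj₀.symm)) hj
          · rw [qb_apply, hbk, qb_repr_toQ]
            have := hreprb k hk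
            rw [this]
            simp
        · intro h
          exact absurd (Finset.mem_univ j₀) h
      rw [hRsum] at heval
      rw [h1] at heval
      have := hcoords j₀
      -- heval : (qb b).repr qpt i₀ = s j₀ * 1 ≥ 0 contradicting hqneg
      rw [heval] at hqneg
      push_cast at hqneg
      linarith
    · exact h1
  -- wall relation u + u' = ∑_{k ≠ i₀} rv k • b k
  have hrel : u + u' = ∑ k ∈ Finset.univ.erase i₀, rv k • b k := by
    have h1 : u' = ∑ i, rv i • b i := by
      rw [hrvdef]
      exact (Module.Basis.sum_repr b u').symm
    have h2 : ∑ i, rv i • b i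
        = rv i₀ • b i₀ + ∑ k ∈ Finset.univ.erase i₀, rv k • b k :=
      (Finset.add_sum_erase _ _ (Finset.mem_univ i₀)).symm
    rw [h1, h2, hrv₀, hudef]
    abel
  -- build the wall relation coefficient function and conclude
  obtain ⟨bv', hbv'⟩ := exists_coeff hbinj rv
  have hsum1 : ∑ x ∈ A, bv' x • x = ∑ k ∈ Finset.univ.erase i₀, rv k • b k := by
    rw [hAdef, Finset.sum_image hbinj]
    exact Finset.sum_congr rfl fun k hk => by rw [hbv' k hk]
  have hsum2 : ∑ x ∈ A, bv' x = ∑ k ∈ Finset.univ.erase i₀, rv k := by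
    rw [hAdef, Finset.sum_image hbinj]
    exact Finset.sum_congr rfl fun k hk => by rw [hbv' k hk]
  have hwall : IsWallRel F (Finsupp.single u 1 + Finsupp.single u' 1
      - ∑ x ∈ A, Finsupp.single x ((bv' x : ℤ) : ℚ)) := by
    refine ⟨A, u, u', bv', ?_, ?_, ?_, ?_, huA, hu'A, (Ne.symm hu'u), hGmem, ?_, ?_, ?_, rfl⟩
    · intro x hx
      rw [hAdef] at hx
      obtain ⟨k, hk, rfl⟩ := Finset.mem_image.mp (Finset.mem_coe.mp hx)
      exact basis_mem_gens hF hσch.1 b Finset.univ (chBasis_spec hσch) (Finset.mem_univ k)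
    · exact hAcard
    · exact basis_mem_gens hF hσch.1 b Finset.univ (chBasis_spec hσch) (Finset.mem_univ i₀)
    · rw [hB'def] at hu'B'
      exact chamber_gens hF hσ'ch hu'B'
    · have : (↑(insert u A) : Set (LVec n)) = ↑(canonB σ) := by rw [hBeq]
      rw [this, ← chamber_rep hσch]
      exact hσch.1
    · have : (↑(insert u' A) : Set (LVec n)) = ↑(canonB σ') := by rw [hB'eq, hB'def]
      rw [this, ← chamber_rep hσ'ch]
      exact hσ'ch.1
    · rw [hsum1]
      exact hrel
  have hbound := wall_sum_le HM huA hu'A (Ne.symm hu'u) hwall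
  rw [hsum2] at hbound
  exact ⟨σ', i₀, u', hσ'ch, hlam₀, (hB'def ▸ hu'B'), hrv₀,
    fun k hk => hAcan (b k) (by
      rw [hAdef]
      exact Finset.mem_image_of_mem _ (Finset.mem_erase_of_ne_of_mem hk (Finset.mem_univ k))),
    hbound⟩

/-! ### The wall-crossing step increases the coordinate sum -/

lemma walk_step (hF : IsSmoothCompleteFan F)
    (HM : ∀ r ∈ MoriCone F, r ≠ 0 → 0 < degMap r)
    {σ : Set (Vec n)} (hσch : IsChamber F σ) {z : Vec n} (hz : z ∉ σ) :
    ∃ σ', IsChamber F σ' ∧ Lsum (chBasis σ) z < Lsum (chBasis σ') z := by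
  classical
  obtain ⟨σ', i₀, u', hσ'ch, hlam₀, hu'B', hrv₀, hkB', hbound⟩ :=
    wall_from_chamber hF HM hσch hz
  set b : Module.Basis (Fin n) ℤ (LVec n) := chBasis σ with hbdef
  set β : Module.Basis (Fin n) ℤ (LVec n) := chBasis σ' with hβdef
  set lam : Fin n → ℚ := fun i => (qb b).repr z i with hlamdef
  set rv : Fin n → ℤ := fun i => b.repr u' i with hrvdef
  refine ⟨σ', hσ'ch, ?_⟩
  have hzdec : z = (∑ k ∈ Finset.univ.erase i₀,
      (lam k + lam i₀ * (rv k : ℚ)) • qb b k) + (-(lam i₀)) • toQ u' := by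
    apply (qb b).repr.injective
    ext i
    rw [map_add, Finsupp.add_apply, map_smul, Finsupp.smul_apply, repr_sum_smul,
      qb_repr_toQ, smul_eq_mul]
    by_cases h : i = i₀
    · subst h
      rw [if_neg (fun hc => (Finset.mem_erase.mp hc).1 rfl), hrv₀]
      push_cast
      ring_nf
      rfl
    · rw [if_pos (Finset.mem_erase_of_ne_of_mem h (Finset.mem_univ i))]
      show lam i = lam i + lam i₀ * (rv i : ℚ) + -lam i₀ * (rv i : ℚ)
      ring
  have hLβ : Lsum β z
      = (∑ k ∈ Finset.univ.erase i₀, (lam k + lam i₀ * (rv k : ℚ))) + (-(lam i₀)) := by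
    conv_lhs => rw [hzdec]
    rw [Lsum_add, Lsum_sum, Lsum_smul]
    have h1 : ∀ k ∈ Finset.univ.erase i₀,
        Lsum β ((lam k + lam i₀ * (rv k : ℚ)) • qb b k)
          = lam k + lam i₀ * (rv k : ℚ) := by
      intro k hk
      rw [Lsum_smul]
      have hbk : ∃ j, β j = b k := by
        have := hkB' k (Finset.ne_of_mem_erase hk)
        rw [canonB] at this
        obtain ⟨j, -, hj⟩ := Finset.mem_image.mp this
        exact ⟨j, hj⟩
      rw [qb_apply, Lsum_basisvec β hbk, mul_one]
    have h2 : Lsum β (toQ u') = 1 := by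
      refine Lsum_basisvec β ?_
      rw [canonB] at hu'B'
      obtain ⟨j, -, hj⟩ := Finset.mem_image.mp hu'B'
      exact ⟨j, hj⟩
    rw [Finset.sum_congr rfl h1, h2, mul_one]
  have hLb : Lsum b z = lam i₀ + ∑ k ∈ Finset.univ.erase i₀, lam k := by
    rw [Lsum]
    exact (Finset.add_sum_erase _ _ (Finset.mem_univ i₀)).symm
  rw [hLβ, hLb]
  have hsplit : ∑ k ∈ Finset.univ.erase i₀, (lam k + lam i₀ * (rv k : ℚ))
      = (∑ k ∈ Finset.univ.erase i₀, lam k)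
        + lam i₀ * (∑ k ∈ Finset.univ.erase i₀, (rv k : ℚ)) := by
    rw [Finset.sum_add_distrib, Finset.mul_sum]
  rw [hsplit]
  have hboundQ : (∑ k ∈ Finset.univ.erase i₀, (rv k : ℚ)) ≤ 1 := by
    have : ((∑ k ∈ Finset.univ.erase i₀, rv k : ℤ) : ℚ) ≤ ((1:ℤ):ℚ) := by
      exact_mod_cast hbound
    push_cast at this
    exact_mod_cast this
  have hkey : 0 < lam i₀ * ((∑ k ∈ Finset.univ.erase i₀, (rv k : ℚ)) - 2) := by
    have h1 : (∑ k ∈ Finset.univ.erase i₀, (rv k : ℚ)) - 2 < 0 := by linarith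
    exact mul_pos_of_neg_of_neg hlam₀ h1
  nlinarith [hkey]

/-! ### Coordinate sums agree on common points of chambers -/

lemma Lsum_eq_on_inter (hF : IsSmoothCompleteFan F) {σ τ : Set (Vec n)}
    (hσch : IsChamber F σ) (hτch : IsChamber F τ) {z : Vec n}
    (hzσ : z ∈ σ) (hzτ : z ∈ τ) : Lsum (chBasis σ) z = Lsum (chBasis τ) z := by
  classical
  set b : Module.Basis (Fin n) ℤ (LVec n) := chBasis σ with hbdef
  set lam : Fin n → ℚ := fun i => (qb b).repr z i with hlamdef
  have hlampos : ∀ i, 0 ≤ lam i := (mem_chamber_iff hσch z).mp hzσ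
  obtain ⟨ℓ, hℓ, hface⟩ := (hF.inter σ hσch.1 τ hτch.1).1
  have hlz : ℓ z = 0 := by
    have h : z ∈ σ ∩ τ := ⟨hzσ, hzτ⟩
    rw [hface] at h
    exact h.2
  have hvmemσ : ∀ i, qb b i ∈ σ := by
    intro i
    rw [chamber_rep hσch, qb_apply]
    refine mem_coneGen_self ⟨b i, ?_, rfl⟩
    rw [canonB]
    exact Finset.mem_coe.mpr (Finset.mem_image_of_mem _ (Finset.mem_univ i))
  have hzdec : z = ∑ i, lam i • qb b i := (Module.Basis.sum_repr (qb b) z).symm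
  have hsum0 : ∑ i, lam i * ℓ (qb b i) = 0 := by
    have : ℓ z = ∑ i, lam i * ℓ (qb b i) := by
      conv_lhs => rw [hzdec]
      rw [map_sum]
      exact Finset.sum_congr rfl fun i _ => by rw [map_smul, smul_eq_mul]
    rw [← this, hlz]
  have hterm0 : ∀ i, lam i * ℓ (qb b i) = 0 := by
    have := (Finset.sum_eq_zero_iff_of_nonneg
      (fun i _ => mul_nonneg (hlampos i) (hℓ _ (hvmemσ i)))).mp hsum0
    exact fun i => this i (Finset.mem_univ i)
  have hvτ : ∀ i, lam i ≠ 0 → toQ (b i) ∈ τ := by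
    intro i hi
    have hl0 : ℓ (qb b i) = 0 := by
      rcases mul_eq_zero.mp (hterm0 i) with h | h
      · exact absurd h hi
      · exact h
    have : qb b i ∈ σ ∩ τ := by
      rw [hface]
      exact ⟨hvmemσ i, hl0⟩
    rw [← qb_apply]
    exact this.2
  have hbk : ∀ i, lam i ≠ 0 → ∃ j, chBasis τ j = b i := by
    intro i hi
    have hg : b i ∈ gens F :=
      basis_mem_gens hF hσch.1 b Finset.univ (chBasis_spec hσch) (Finset.mem_univ i)
    have := gen_mem_canonB hF hτch hg (hvτ i hi)
    rw [canonB] at this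
    obtain ⟨j, -, hj⟩ := Finset.mem_image.mp this
    exact ⟨j, hj⟩
  have hz2 : z = ∑ i ∈ Finset.univ.filter (fun i => lam i ≠ 0), lam i • qb b i := by
    rw [hzdec]
    refine (Finset.sum_subset (Finset.filter_subset _ _) ?_).symm
    intro i _ hi
    rw [Finset.mem_filter] at hi
    push_neg at hi
    rw [hi (Finset.mem_univ i), zero_smul]
  have hLτ : Lsum (chBasis τ) z = ∑ i ∈ Finset.univ.filter (fun i => lam i ≠ 0), lam i := by
    conv_lhs => rw [hz2]
    rw [Lsum_sum]
    refine Finset.sum_congr rfl fun i hi => ?_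
    rw [Lsum_smul]
    have hine : lam i ≠ 0 := (Finset.mem_filter.mp hi).2
    rw [qb_apply, Lsum_basisvec _ (hbk i hine), mul_one]
  have hLσ : Lsum b z = ∑ i ∈ Finset.univ.filter (fun i => lam i ≠ 0), lam i := by
    rw [Lsum]
    refine (Finset.sum_subset (Finset.filter_subset _ _) ?_).symm
    intro i _ hi
    rw [Finset.mem_filter] at hi
    push_neg at hi
    exact hi (Finset.mem_univ i)
  rw [hLτ, hLσ]

/-! ### The walk : global comparison of coordinate sums -/

lemma walk_aux (hF : IsSmoothCompleteFan F)
    (HM : ∀ r ∈ MoriCone F, r ≠ 0 → 0 < degMap r) (z : Vec n)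
    {ρ : Set (Vec n)} (hρch : IsChamber F ρ) (hzρ : z ∈ ρ) :
    ∀ (k : ℕ) (σ : Set (Vec n)), IsChamber F σ →
      Set.ncard {γ : Set (Vec n) | IsChamber F γ
        ∧ Lsum (chBasis σ) z < Lsum (chBasis γ) z} ≤ k →
      Lsum (chBasis σ) z ≤ Lsum (chBasis ρ) z
        ∧ (z ∉ σ → Lsum (chBasis σ) z < Lsum (chBasis ρ) z) := by
  classical
  intro k
  induction k with
  | zero =>
    intro σ hσch hcard
    by_cases hzσ : z ∈ σ
    · have heq := Lsum_eq_on_inter hF hσch hρch hzσ hzρ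
      exact ⟨le_of_eq heq, fun h => absurd hzσ h⟩
    · exfalso
      obtain ⟨σ', hσ'ch, hlt⟩ := walk_step hF HM hσch hzσ
      have hfin : {γ : Set (Vec n) | IsChamber F γ
          ∧ Lsum (chBasis σ) z < Lsum (chBasis γ) z}.Finite :=
        hF.finite.subset (fun γ hγ => hγ.1.1)
      have hpos : 0 < Set.ncard {γ : Set (Vec n) | IsChamber F γ
          ∧ Lsum (chBasis σ) z < Lsum (chBasis γ) z} :=
        (Set.ncard_pos hfin).mpr ⟨σ', hσ'ch, hlt⟩
      omega
  | succ k ihk =>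
    intro σ hσch hcard
    by_cases hzσ : z ∈ σ
    · have heq := Lsum_eq_on_inter hF hσch hρch hzσ hzρ
      exact ⟨le_of_eq heq, fun h => absurd hzσ h⟩
    · obtain ⟨σ', hσ'ch, hlt⟩ := walk_step hF HM hσch hzσ
      have hfin : {γ : Set (Vec n) | IsChamber F γ
          ∧ Lsum (chBasis σ) z < Lsum (chBasis γ) z}.Finite :=
        hF.finite.subset (fun γ hγ => hγ.1.1)
      have hsub : {γ : Set (Vec n) | IsChamber F γ
            ∧ Lsum (chBasis σ') z < Lsum (chBasis γ) z}
          ⊂ {γ : Set (Vec n) | IsChamber F γ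
            ∧ Lsum (chBasis σ) z < Lsum (chBasis γ) z} := by
        constructor
        · rintro γ ⟨h1, h2⟩
          exact ⟨h1, lt_trans hlt h2⟩
        · intro hcontra
          have := hcontra ⟨hσ'ch, hlt⟩
          exact lt_irrefl _ this.2
      have hlt' := Set.ncard_lt_ncard hsub hfin
      have hIH := ihk σ' hσ'ch (by omega)
      exact ⟨le_of_lt (lt_of_lt_of_le hlt hIH.1),
        fun _ => lt_of_lt_of_le hlt hIH.1⟩

/-! ### Forward direction -/

lemma forward_dir (hF : IsSmoothCompleteFan F)
    (HM : ∀ r ∈ MoriCone F, r ≠ 0 → 0 < degMap r) : IsFano F := by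
  classical
  intro P Y a hP hPR
  obtain ⟨hYg, hYF, hapos, hsum⟩ := hPR
  obtain ⟨τ, hτch, hYτ⟩ := exists_chamber hF hYF
  have hYB : ∀ y ∈ Y, ∃ j, chBasis τ j = y := by
    intro y hy
    have := gen_mem_canonB hF hτch (hYg hy)
      (hYτ (mem_coneGen_self ⟨y, Finset.mem_coe.mpr hy, rfl⟩))
    rw [canonB] at this
    obtain ⟨j, -, hj⟩ := Finset.mem_image.mp this
    exact ⟨j, hj⟩
  have hLq : Lsum (chBasis τ) (toQ (∑ x ∈ P, x)) = ∑ y ∈ Y, (a y : ℚ) := by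
    rw [hsum, toQ_sum]
    have h1 : ∀ y ∈ Y, toQ (a y • y) = (a y : ℚ) • toQ y := fun y _ => toQ_zsmul _ _
    rw [Finset.sum_congr rfl h1, Lsum_sum]
    refine Finset.sum_congr rfl fun y hy => ?_
    rw [Lsum_smul, Lsum_basisvec _ (hYB y hy), mul_one]
  have hLsplit : Lsum (chBasis τ) (toQ (∑ x ∈ P, x))
      = ∑ x ∈ P, Lsum (chBasis τ) (toQ x) := by
    rw [toQ_sum, Lsum_sum]
  have hbound : ∀ x ∈ P, Lsum (chBasis τ) (toQ x) ≤ 1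
      ∧ (x ∉ canonB τ → Lsum (chBasis τ) (toQ x) < 1) := by
    intro x hx
    have hxg : x ∈ gens F := hP.1 (Finset.mem_coe.mpr hx)
    obtain ⟨ρ, hρch, hrayρ⟩ := exists_chamber hF hxg.2
    have hxρ : toQ x ∈ ρ := hrayρ (mem_coneGen_self rfl)
    have hLρ : Lsum (chBasis ρ) (toQ x) = 1 := by
      refine Lsum_basisvec _ ?_
      have := gen_mem_canonB hF hρch hxg hxρ
      rw [canonB] at this
      obtain ⟨j, -, hj⟩ := Finset.mem_image.mp this
      exact ⟨j, hj⟩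
    have hwalk := walk_aux hF HM (toQ x) hρch hxρ
      (Set.ncard {γ : Set (Vec n) | IsChamber F γ
        ∧ Lsum (chBasis τ) (toQ x) < Lsum (chBasis γ) (toQ x)}) τ hτch (le_refl _)
    constructor
    · calc Lsum (chBasis τ) (toQ x) ≤ Lsum (chBasis ρ) (toQ x) := hwalk.1
        _ = 1 := hLρ
    · intro hxB
      have hxτ : toQ x ∉ τ := by
        intro h
        exact hxB (gen_mem_canonB hF hτch hxg h)
      calc Lsum (chBasis τ) (toQ x) < Lsum (chBasis ρ) (toQ x) := hwalk.2 hxτ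
        _ = 1 := hLρ
  have hPB : ∃ x ∈ P, x ∉ canonB τ := by
    by_contra h
    push_neg at h
    apply hP.2.1
    refine subcone_mem hF hτch.1 hP.1 ?_
    intro x hx
    rw [chamber_rep hτch]
    exact mem_coneGen_self ⟨x, Finset.mem_coe.mpr (h x hx), rfl⟩
  obtain ⟨x₀, hx₀P, hx₀B⟩ := hPB
  have hlt : ∑ x ∈ P, Lsum (chBasis τ) (toQ x) < ∑ x ∈ P, (1:ℚ) := by
    refine Finset.sum_lt_sum (fun x hx => (hbound x hx).1) ⟨x₀, hx₀P, ?_⟩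
    exact (hbound x₀ hx₀P).2 hx₀B
  have hQ : (∑ y ∈ Y, (a y : ℚ)) < (P.card : ℚ) := by
    rw [← hLq, hLsplit]
    simpa using hlt
  have hZ : (∑ y ∈ Y, a y) < (P.card : ℤ) := by
    have : ((∑ y ∈ Y, a y : ℤ) : ℚ) < ((P.card : ℤ) : ℚ) := by
      push_cast
      exact_mod_cast hQ
    exact_mod_cast this
  show (0:ℤ) < (P.card : ℤ) - ∑ y ∈ Y, a y
  omega

end BatAux

-- AUX END

/-- **Batyrev's characterization of toric Fano varieties** (Proposition 1.5): for a
smooth complete fan `Σ` in `ℤ^n`, the degree linear form `(a_x) ↦ ∑_x a_x`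
(intersection with the anticanonical class) is strictly positive on every nonzero
element of the Mori cone `NE(Σ)` if and only if every primitive collection of `Σ`
has strictly positive degree. -/
theorem fano_iff_deg_positive_on_moriCone {n : ℕ} (F : Set (Set (Vec n)))
    (hF : IsSmoothCompleteFan F) :
    (∀ r ∈ MoriCone F, r ≠ 0 → 0 < degMap r) ↔ IsFano F := by
  constructor
  · intro HM
    exact BatAux.forward_dir hF HM
  · intro hFano
    exact BatAux.backward_dir hF hFano
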